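/- arXiv:2504.20730 — 9 statements merged into one kernel-verified Lean document; each statement's English description precedes it below -/
import Mathlib

section
/- Let S ∈ ℂ^(2n×2n) be conjugate symplectic, i.e. S Ω S† = Ω with Ω = [[0, Iₙ], [−Iₙ, 0]]. Then for every nonzero complex number λ, λ is an eigenvalue of S†S if and only if λ⁻¹ is an eigenvalue of S†S; consequently the singular values of S come in reciprocal pairs (d, d⁻¹). -/
open Matrix

/-- The standard `2n × 2n` symplectic form `Ω = [[0, Iₙ], [−Iₙ, 0]]`. -/
def Omega (n : ℕ) : Matrix (Fin n ⊕ Fin n) (Fin n ⊕ Fin n) ℂ :=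
  Matrix.fromBlocks 0 1 (-1) 0

/-- A matrix `A ∈ ℂ^(2n×2n)` is conjugate symplectic if `A Ω A† = Ω`. -/
def ConjSymplectic {n : ℕ} (A : Matrix (Fin n ⊕ Fin n) (Fin n ⊕ Fin n) ℂ) : Prop :=
  A * Omega n * Aᴴ = Omega n

/-- For a conjugate symplectic `S`, a nonzero `λ` is an eigenvalue of `S†S` iff `λ⁻¹` is;
hence the singular values of `S` come in reciprocal pairs. -/
theorem conjSymplectic_eigenvalues_reciprocal_pairs (n : ℕ)
    (S : Matrix (Fin n ⊕ Fin n) (Fin n ⊕ Fin n) ℂ) (hS : ConjSymplectic S)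
    (lam : ℂ) (hlam : lam ≠ 0) :
    (Sᴴ * S - lam • (1 : Matrix (Fin n ⊕ Fin n) (Fin n ⊕ Fin n) ℂ)).det = 0 ↔
      (Sᴴ * S - lam⁻¹ • (1 : Matrix (Fin n ⊕ Fin n) (Fin n ⊕ Fin n) ℂ)).det = 0 := by
  set O := Omega n with hO
  have hOO : O * O = -1 := by
    show Omega n * Omega n = -1
    rw [Omega, Matrix.fromBlocks_multiply]
    simp [← Matrix.fromBlocks_one, Matrix.fromBlocks_neg]
  have hSdef : S * O * Sᴴ = O := hS
  -- derive Sᴴ * O * S = O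
  have h2 : (O * S) * (O * Sᴴ) = -1 := by
    rw [mul_assoc O S _, ← mul_assoc S O Sᴴ, hSdef, hOO]
  have h3 : (O * S) * (-(O * Sᴴ)) = 1 := by rw [mul_neg, h2, neg_neg]
  have h4 : (-(O * Sᴴ)) * (O * S) = 1 := mul_eq_one_comm.mp h3
  have hOS : Sᴴ * O * S = O := by
    have h5 : O * (Sᴴ * O * S) = -1 := by
      have : (-(O * Sᴴ)) * (O * S) = -(O * (Sᴴ * O * S)) := by noncomm_ring
      rw [this] at h4
      linear_combination (norm := noncomm_ring) -h4
    calc Sᴴ * O * S = ((-O) * O) * (Sᴴ * O * S) := by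
          rw [neg_mul, hOO, neg_neg, one_mul]
      _ = (-O) * (O * (Sᴴ * O * S)) := by rw [mul_assoc]
      _ = O := by rw [h5]; simp
  set M := Sᴴ * S with hMdef
  have hM : M * O * M = O := by
    have : M * O * M = Sᴴ * (S * O * Sᴴ) * S := by rw [hMdef]; noncomm_ring
    rw [this, hSdef, hOS]
  set N := O * M * (-O) with hNdef
  have hMN : M * N = 1 := by
    have : M * N = (M * O * M) * (-O) := by rw [hNdef]; noncomm_ring
    rw [this, hM, mul_neg, hOO, neg_neg]
  have hNM : N * M = 1 := mul_eq_one_comm.mp hMN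
  have hdetN : N.det ≠ 0 := by
    intro h
    have := congrArg Matrix.det hNM
    rw [Matrix.det_mul, h, zero_mul, Matrix.det_one] at this
    exact zero_ne_one this
  -- conjugation identity
  have hconj : N - lam • 1 = O * (M - lam • 1) * (-O) := by
    rw [Matrix.mul_sub, Matrix.sub_mul, hNdef]
    congr 1
    rw [Matrix.mul_smul, Matrix.smul_mul, mul_one, mul_neg, hOO, neg_neg]
  have hdetOmO : O.det * (-O).det = 1 := by
    rw [← Matrix.det_mul, mul_neg, hOO, neg_neg, Matrix.det_one]
  have E1 : (M - lam • 1).det = (N - lam • 1).det := by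
    rw [hconj, Matrix.det_mul, Matrix.det_mul]
    ring_nf
    rw [mul_comm, ← mul_assoc, mul_comm (-O).det O.det, hdetOmO, one_mul]
  have E2 : N - lam • 1 = N * (1 - lam • M) := by
    rw [Matrix.mul_sub, mul_one, Matrix.mul_smul, hNM]
  have E3 : M - lam⁻¹ • 1 = (-lam⁻¹) • (1 - lam • M) := by
    rw [smul_sub, smul_smul, neg_mul, inv_mul_cancel₀ hlam]
    module
  have E4 : (M - lam⁻¹ • 1).det = (-lam⁻¹) ^ (Fintype.card (Fin n ⊕ Fin n)) * (1 - lam • M).det := by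
    rw [E3, Matrix.det_smul]
  constructor
  · intro h
    rw [E1, E2, Matrix.det_mul] at h
    rcases mul_eq_zero.mp h with h' | h'
    · exact absurd h' hdetN
    · rw [E4, h', mul_zero]
  · intro h
    rw [E4, mul_eq_zero] at h
    rcases h with h' | h'
    · exact absurd h' (pow_ne_zero _ (neg_ne_zero.mpr (inv_ne_zero hlam)))
    · rw [E1, E2, Matrix.det_mul, h', mul_zero]
end

section
/- Let A ∈ ℂ^(n×n) (n ≥ 2) and suppose A = U Σ V† with U, V ∈ ℂ^(n×n) unitary and Σ = diag(σ₁, …, σₙ) real diagonal with σ₁ = σ₂ > σ₃ > … > σₙ > 0. Then, for unitary matrices Ũ, Ṽ ∈ ℂ^(n×n), one has A = Ũ Σ Ṽ† if and only if Ũ = U · diag(W, Θ) and Ṽ = V · diag(W, Θ), where W is an arbitrary 2×2 complex unitary matrix, Θ = diag(e^{iθ₃}, …, e^{iθₙ}) for some θ₃, …, θₙ ∈ ℝ, and diag(W, Θ) denotes the block-diagonal n×n matrix with W in the leading 2×2 block and Θ in the trailing (n−2)×(n−2) block. -/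
open Matrix

/-- The block-diagonal `n × n` matrix `diag(W, Θ)` with a `2 × 2` block `W` in the leading
position and the diagonal phase matrix `Θ = diag(e^{iθ₃}, …, e^{iθₙ})` in the trailing
`(n−2) × (n−2)` block. -/
noncomputable def blockDiagWTheta (n : ℕ) (W : Matrix (Fin 2) (Fin 2) ℂ) (θ : Fin n → ℝ) :
    Matrix (Fin n) (Fin n) ℂ :=
  Matrix.of fun i j =>
    if h : (i : ℕ) < 2 ∧ (j : ℕ) < 2 then W ⟨i, h.1⟩ ⟨j, h.2⟩
    else if i = j then Complex.exp ((θ i : ℂ) * Complex.I) else 0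

lemma bd_block {n : ℕ} (W : Matrix (Fin 2) (Fin 2) ℂ) (θ : Fin n → ℝ) {i j : Fin n}
    (hi : (i : ℕ) < 2) (hj : (j : ℕ) < 2) :
    blockDiagWTheta n W θ i j = W ⟨i, hi⟩ ⟨j, hj⟩ := by
  simp only [blockDiagWTheta, Matrix.of_apply]
  rw [dif_pos ⟨hi, hj⟩]

lemma bd_diag {n : ℕ} (W : Matrix (Fin 2) (Fin 2) ℂ) (θ : Fin n → ℝ) {i : Fin n}
    (hi : ¬ (i : ℕ) < 2) :
    blockDiagWTheta n W θ i i = Complex.exp ((θ i : ℂ) * Complex.I) := by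
  simp only [blockDiagWTheta, Matrix.of_apply]
  rw [dif_neg (fun h => hi h.1), if_true]

lemma bd_zero {n : ℕ} (W : Matrix (Fin 2) (Fin 2) ℂ) (θ : Fin n → ℝ) {i j : Fin n}
    (h : ¬ ((i : ℕ) < 2 ∧ (j : ℕ) < 2)) (hij : i ≠ j) :
    blockDiagWTheta n W θ i j = 0 := by
  simp only [blockDiagWTheta, Matrix.of_apply]
  rw [dif_neg h, if_neg hij]

lemma bd_unitary {n : ℕ} (hn : 2 ≤ n) (W : Matrix (Fin 2) (Fin 2) ℂ) (θ : Fin n → ℝ)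
    (hW : Wᴴ * W = 1) :
    (blockDiagWTheta n W θ)ᴴ * blockDiagWTheta n W θ = 1 := by
  ext i j
  rw [Matrix.mul_apply]
  simp only [Matrix.conjTranspose_apply]
  by_cases hi : (i : ℕ) < 2
  · by_cases hj : (j : ℕ) < 2
    · rw [Finset.sum_eq_add (⟨0, by omega⟩ : Fin n) (⟨1, by omega⟩ : Fin n)
        (by simp [Fin.ext_iff])
        (fun c _ hc => by
          have hc2 : ¬ (c : ℕ) < 2 := by
            rcases hc with ⟨h1, h2⟩
            intro hlt
            have : (c : ℕ) = 0 ∨ (c : ℕ) = 1 := by omega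
            rcases this with h | h
            · exact h1 (Fin.ext h)
            · exact h2 (Fin.ext h)
          rw [bd_zero W θ (fun h => hc2 h.1) (fun h => hc2 (h ▸ hi))]
          simp)
        (fun h => absurd (Finset.mem_univ _) h)
        (fun h => absurd (Finset.mem_univ _) h)]
      rw [bd_block W θ (show ((⟨0, by omega⟩ : Fin n) : ℕ) < 2 by simp) hi,
          bd_block W θ (show ((⟨0, by omega⟩ : Fin n) : ℕ) < 2 by simp) hj,
          bd_block W θ (show ((⟨1, by omega⟩ : Fin n) : ℕ) < 2 by simp) hi,
          bd_block W θ (show ((⟨1, by omega⟩ : Fin n) : ℕ) < 2 by simp) hj]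
      have hWe := Matrix.ext_iff.mpr hW ⟨i, hi⟩ ⟨j, hj⟩
      rw [Matrix.mul_apply, Fin.sum_univ_two] at hWe
      simp only [Matrix.conjTranspose_apply] at hWe
      simp only [Matrix.one_apply, Fin.ext_iff] at hWe ⊢
      convert hWe using 3 <;> rfl
    · have hij : i ≠ j := fun h => hj (h ▸ hi)
      rw [Finset.sum_eq_zero, Matrix.one_apply_ne hij]
      intro k _
      by_cases hk : (k : ℕ) < 2
      · rw [bd_zero W θ (fun h => hj h.2) (fun h => hj (h ▸ hk)), mul_zero]
      · rw [bd_zero W θ (fun h => hk h.1) (fun h => hk (h ▸ hi))]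
        simp
  · by_cases hj : (j : ℕ) < 2
    · have hij : i ≠ j := fun h => hi (h ▸ hj)
      rw [Finset.sum_eq_zero, Matrix.one_apply_ne hij]
      intro k _
      by_cases hk : (k : ℕ) < 2
      · rw [bd_zero W θ (fun h => hi h.2) (fun h => hi (h ▸ hk))]
        simp
      · rw [bd_zero W θ (fun h => hk h.1) (fun h => hk (h ▸ hj)), mul_zero]
    · by_cases hij : i = j
      · subst hij
        rw [Finset.sum_eq_single i
          (fun k _ hk => by
            rw [bd_zero W θ (fun h => hi h.2) hk]; simp)
          (fun h => absurd (Finset.mem_univ _) h)]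
        rw [bd_diag W θ hi, Matrix.one_apply_eq]
        rw [Complex.star_def, ← Complex.normSq_eq_conj_mul_self,
          Complex.normSq_eq_norm_sq, Complex.norm_exp_ofReal_mul_I]
        norm_num
      · rw [Finset.sum_eq_zero, Matrix.one_apply_ne hij]
        intro k _
        by_cases hk : k = i
        · subst hk
          rw [bd_zero W θ (fun h => hi h.1) hij, mul_zero]
        · rw [bd_zero W θ (fun h => hi h.2) hk]
          simp

lemma bd_support {n : ℕ} (W : Matrix (Fin 2) (Fin 2) ℂ) (θ : Fin n → ℝ) {i j : Fin n}
    (h : blockDiagWTheta n W θ i j ≠ 0) : ((i : ℕ) < 2 ∧ (j : ℕ) < 2) ∨ i = j := by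
  by_contra hc
  push_neg at hc
  exact h (bd_zero W θ (fun hb => (hc.1 hb.1).not_gt hb.2) hc.2)

lemma bd_comm_diag {n : ℕ} (W : Matrix (Fin 2) (Fin 2) ℂ) (θ : Fin n → ℝ)
    (c : Fin n → ℂ) (hc : ∀ i j : Fin n, (i : ℕ) < 2 → (j : ℕ) < 2 → c i = c j) :
    blockDiagWTheta n W θ * diagonal c = diagonal c * blockDiagWTheta n W θ := by
  ext i j
  rw [Matrix.mul_diagonal, Matrix.diagonal_mul]
  by_cases h : blockDiagWTheta n W θ i j = 0
  · rw [h, zero_mul, mul_zero]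
  · rcases bd_support W θ h with ⟨h1, h2⟩ | rfl
    · rw [hc i j h1 h2]; ring
    · ring

/-- Non-uniqueness of the SVD when the two largest singular values coincide:
`A = U₂ Σ V₂†` iff `U₂ = U·diag(W,Θ)` and `V₂ = V·diag(W,Θ)` for some unitary `2×2`
matrix `W` and some phases `θ`. -/
theorem svd_uniqueness_one_degenerate_pair (n : ℕ) (hn : 2 ≤ n)
    (A U V U₂ V₂ : Matrix (Fin n) (Fin n) ℂ) (σ : Fin n → ℝ)
    (hU : Uᴴ * U = 1) (hV : Vᴴ * V = 1)
    (hU₂ : U₂ᴴ * U₂ = 1) (hV₂ : V₂ᴴ * V₂ = 1)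
    (h12 : σ ⟨0, by omega⟩ = σ ⟨1, by omega⟩)
    (hdec : ∀ i j : Fin n, 1 ≤ (i : ℕ) → i < j → σ j < σ i)
    (hpos : ∀ i : Fin n, 0 < σ i)
    (hA : A = U * diagonal (fun i => ((σ i : ℝ) : ℂ)) * Vᴴ) :
    A = U₂ * diagonal (fun i => ((σ i : ℝ) : ℂ)) * V₂ᴴ ↔
      ∃ (W : Matrix (Fin 2) (Fin 2) ℂ) (θ : Fin n → ℝ),
        Wᴴ * W = 1 ∧
        U₂ = U * blockDiagWTheta n W θ ∧
        V₂ = V * blockDiagWTheta n W θ := by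
  have hUU : U * Uᴴ = 1 := mul_eq_one_comm.mp hU
  have hVV : V * Vᴴ = 1 := mul_eq_one_comm.mp hV
  -- the two leading singular values agree
  have hblk : ∀ i j : Fin n, (i : ℕ) < 2 → (j : ℕ) < 2 → σ i = σ j := by
    have key : ∀ i : Fin n, (i : ℕ) < 2 → σ i = σ ⟨0, by omega⟩ := by
      intro i hi
      have : (i : ℕ) = 0 ∨ (i : ℕ) = 1 := by omega
      rcases this with h | h
      · rw [show i = (⟨0, by omega⟩ : Fin n) from Fin.ext h]
      · rw [show i = (⟨1, by omega⟩ : Fin n) from Fin.ext h, ← h12]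
    intro i j hi hj
    rw [key i hi, key j hj]
  constructor
  · intro h
    have key : U * diagonal (fun i => ((σ i : ℝ) : ℂ)) * Vᴴ
        = U₂ * diagonal (fun i => ((σ i : ℝ) : ℂ)) * V₂ᴴ := hA.symm.trans h
    have hD : (diagonal (fun i => ((σ i : ℝ) : ℂ)))ᴴ = diagonal (fun i => ((σ i : ℝ) : ℂ)) := by
      have hst : (star fun i : Fin n => ((σ i : ℝ) : ℂ)) = fun i : Fin n => ((σ i : ℝ) : ℂ) :=
        funext fun i => by simp only [Pi.star_apply, Complex.star_def, Complex.conj_ofReal]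
      rw [Matrix.diagonal_conjTranspose, hst]
    have keyT : V * (diagonal (fun i => ((σ i : ℝ) : ℂ)) * Uᴴ)
        = V₂ * (diagonal (fun i => ((σ i : ℝ) : ℂ)) * U₂ᴴ) := by
      have := congrArg conjTranspose key
      simpa [Matrix.conjTranspose_mul, hD, Matrix.mul_assoc] using this
    -- D * Q = P * D
    have hDQ : diagonal (fun i => ((σ i : ℝ) : ℂ)) * (Vᴴ * V₂)
        = Uᴴ * U₂ * diagonal (fun i => ((σ i : ℝ) : ℂ)) := by
      have h1 := congrArg (fun M => Uᴴ * M * V₂) key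
      simp only [Matrix.mul_assoc] at h1
      rw [hV₂, Matrix.mul_one] at h1
      rw [← Matrix.mul_assoc Uᴴ U, hU, Matrix.one_mul] at h1
      rw [Matrix.mul_assoc]
      exact h1
    -- D * P = Q * D
    have hDP : diagonal (fun i => ((σ i : ℝ) : ℂ)) * (Uᴴ * U₂)
        = Vᴴ * V₂ * diagonal (fun i => ((σ i : ℝ) : ℂ)) := by
      have h1 := congrArg (fun M => Vᴴ * M * U₂) keyT
      simp only [Matrix.mul_assoc] at h1
      rw [hU₂, Matrix.mul_one] at h1
      rw [← Matrix.mul_assoc Vᴴ V, hV, Matrix.one_mul] at h1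
      rw [Matrix.mul_assoc]
      exact h1
    have e1 : ∀ i j : Fin n, ((σ i : ℝ) : ℂ) * (Vᴴ * V₂) i j
        = (Uᴴ * U₂) i j * ((σ j : ℝ) : ℂ) := by
      intro i j
      have := Matrix.ext_iff.mpr hDQ i j
      rwa [Matrix.diagonal_mul, Matrix.mul_diagonal] at this
    have e2 : ∀ i j : Fin n, ((σ i : ℝ) : ℂ) * (Uᴴ * U₂) i j
        = (Vᴴ * V₂) i j * ((σ j : ℝ) : ℂ) := by
      intro i j
      have := Matrix.ext_iff.mpr hDP i j
      rwa [Matrix.diagonal_mul, Matrix.mul_diagonal] at this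
    have hcne : ∀ i : Fin n, ((σ i : ℝ) : ℂ) ≠ 0 := fun i => by
      exact_mod_cast (hpos i).ne'
    have hPzero : ∀ i j : Fin n, σ i ≠ σ j → (Uᴴ * U₂) i j = 0 := by
      intro i j hne
      have hsq : ((σ i : ℝ) : ℂ) ^ 2 - ((σ j : ℝ) : ℂ) ^ 2 ≠ 0 := by
        intro hz
        have h2 : (σ i) ^ 2 = (σ j) ^ 2 := by
          have := sub_eq_zero.mp hz
          exact_mod_cast this
        rcases lt_trichotomy (σ i) (σ j) with hlt | heq | hlt
        · nlinarith [hpos i, hpos j]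
        · exact hne heq
        · nlinarith [hpos i, hpos j]
      have hmain : (Uᴴ * U₂) i j * (((σ i : ℝ) : ℂ) ^ 2 - ((σ j : ℝ) : ℂ) ^ 2) = 0 := by
        linear_combination ((σ i : ℝ) : ℂ) * e2 i j + ((σ j : ℝ) : ℂ) * e1 i j
      exact (mul_eq_zero.mp hmain).resolve_right hsq
    have hQP : Vᴴ * V₂ = Uᴴ * U₂ := by
      ext i j
      by_cases hσ : σ i = σ j
      · have hcc : ((σ j : ℝ) : ℂ) = ((σ i : ℝ) : ℂ) := by exact_mod_cast hσ.symm
        apply mul_left_cancel₀ (hcne i)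
        linear_combination (-1 : ℂ) * e2 i j - (Vᴴ * V₂) i j * hcc
      · have hP0 := hPzero i j hσ
        have h1 := e1 i j
        rw [hP0, zero_mul] at h1
        rw [hP0]
        exact (mul_eq_zero.mp h1).resolve_left (hcne i)
    have hP1 : (Uᴴ * U₂)ᴴ * (Uᴴ * U₂) = 1 := by
      rw [Matrix.conjTranspose_mul, Matrix.conjTranspose_conjTranspose,
        Matrix.mul_assoc, ← Matrix.mul_assoc U Uᴴ U₂, hUU, Matrix.one_mul]
      exact hU₂
    -- singular value separation
    have hlt2 : ∀ i j : Fin n, (i : ℕ) < (j : ℕ) → 2 ≤ (j : ℕ) → σ j < σ i := by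
      intro i j hij hj2
      by_cases h1 : 1 ≤ (i : ℕ)
      · exact hdec i j h1 (Fin.lt_def.mpr hij)
      · have hi0 : (i : ℕ) = 0 := by omega
        have hσi : σ i = σ ⟨1, by omega⟩ := by
          rw [show i = (⟨0, by omega⟩ : Fin n) from Fin.ext hi0]
          exact h12
        rw [hσi]
        exact hdec ⟨1, by omega⟩ j (by simp) (Fin.lt_def.mpr (by simp; omega))
    have hne2 : ∀ i j : Fin n, ¬ ((i : ℕ) < 2 ∧ (j : ℕ) < 2) → i ≠ j → σ i ≠ σ j := by
      intro i j hnb hij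
      rcases Nat.lt_trichotomy (i : ℕ) (j : ℕ) with hlt | heq | hlt
      · have hj2 : 2 ≤ (j : ℕ) := by by_contra hc; exact hnb ⟨by omega, by omega⟩
        exact (hlt2 i j hlt hj2).ne'
      · exact absurd (Fin.ext heq) hij
      · have hi2 : 2 ≤ (i : ℕ) := by by_contra hc; exact hnb ⟨by omega, by omega⟩
        exact (hlt2 j i hlt hi2).ne
    have hPoff : ∀ k m : Fin n, ¬ ((k : ℕ) < 2 ∧ (m : ℕ) < 2) → k ≠ m → (Uᴴ * U₂) k m = 0 :=
      fun k m h1 h2 => hPzero k m (hne2 k m h1 h2)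
    have hdiag : ∀ i : Fin n, ¬ (i : ℕ) < 2 →
        star ((Uᴴ * U₂) i i) * (Uᴴ * U₂) i i = 1 := by
      intro i hi
      have hsum := Matrix.ext_iff.mpr hP1 i i
      rw [Matrix.mul_apply] at hsum
      rw [Finset.sum_eq_single i (fun k _ hk => by
          rw [Matrix.conjTranspose_apply, hPoff k i (fun hb => hi hb.2) hk]
          simp) (fun hmem => absurd (Finset.mem_univ _) hmem)] at hsum
      rw [Matrix.conjTranspose_apply, Matrix.one_apply_eq] at hsum
      exact hsum
    have hPeqB : Uᴴ * U₂ = blockDiagWTheta n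
        (Matrix.of fun a b => (Uᴴ * U₂) (Fin.castLE hn a) (Fin.castLE hn b))
        (fun i => ((Uᴴ * U₂) i i).arg) := by
      ext i j
      by_cases hb : (i : ℕ) < 2 ∧ (j : ℕ) < 2
      · rw [bd_block _ _ hb.1 hb.2]
        rfl
      · by_cases hij : i = j
        · subst hij
          have hi : ¬ (i : ℕ) < 2 := fun h => hb ⟨h, h⟩
          rw [bd_diag _ _ hi]
          have h1 := hdiag i hi
          have habs : ‖(Uᴴ * U₂) i i‖ = 1 := by
            have hns : Complex.normSq ((Uᴴ * U₂) i i) = 1 := by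
              rw [Complex.star_def, ← Complex.normSq_eq_conj_mul_self] at h1
              exact_mod_cast h1
            rw [Complex.norm_def, hns, Real.sqrt_one]
          conv_lhs => rw [← Complex.norm_mul_exp_arg_mul_I ((Uᴴ * U₂) i i)]
          rw [habs]
          norm_num
        · rw [bd_zero _ _ hb hij]
          exact hPoff i j hb hij
    have hWU : (Matrix.of fun a b => (Uᴴ * U₂) (Fin.castLE hn a) (Fin.castLE hn b))ᴴ *
        (Matrix.of fun a b => (Uᴴ * U₂) (Fin.castLE hn a) (Fin.castLE hn b)) = 1 := by
      ext a b
      rw [Matrix.mul_apply, Fin.sum_univ_two]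
      simp only [Matrix.conjTranspose_apply, Matrix.of_apply]
      have hPe := Matrix.ext_iff.mpr hP1 (Fin.castLE hn a) (Fin.castLE hn b)
      rw [Matrix.mul_apply] at hPe
      rw [Finset.sum_eq_add (Fin.castLE hn 0) (Fin.castLE hn 1)
        (by simp [Fin.ext_iff])
        (fun c _ hc => by
          have hc2 : 2 ≤ (c : ℕ) := by
            rcases hc with ⟨hc0, hc1⟩
            rw [Ne, Fin.ext_iff, Fin.coe_castLE] at hc0 hc1
            rw [show ((0 : Fin 2) : ℕ) = 0 from rfl] at hc0
            rw [show ((1 : Fin 2) : ℕ) = 1 from rfl] at hc1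
            omega
          rw [Matrix.conjTranspose_apply,
            hPoff c (Fin.castLE hn a) (fun hb => by omega)
              (fun hb => by
                rw [hb] at hc2
                exact absurd (show ((Fin.castLE hn a : Fin n) : ℕ) < 2 from a.2) (by omega))]
          simp)
        (fun hmem => absurd (Finset.mem_univ _) hmem)
        (fun hmem => absurd (Finset.mem_univ _) hmem)] at hPe
      rw [Matrix.conjTranspose_apply, Matrix.conjTranspose_apply] at hPe
      rw [hPe]
      simp [Matrix.one_apply, Fin.ext_iff]
    refine ⟨Matrix.of fun a b => (Uᴴ * U₂) (Fin.castLE hn a) (Fin.castLE hn b),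
      fun i => ((Uᴴ * U₂) i i).arg, hWU, ?_, ?_⟩
    · calc U₂ = (U * Uᴴ) * U₂ := by rw [hUU, Matrix.one_mul]
        _ = U * (Uᴴ * U₂) := by rw [Matrix.mul_assoc]
        _ = _ := by conv_lhs => rw [hPeqB]
    · calc V₂ = (V * Vᴴ) * V₂ := by rw [hVV, Matrix.one_mul]
        _ = V * (Vᴴ * V₂) := by rw [Matrix.mul_assoc]
        _ = _ := by rw [hQP]; conv_lhs => rw [hPeqB]
  · rintro ⟨W, θ, hW, hU₂eq, hV₂eq⟩
    have hBB : blockDiagWTheta n W θ * (blockDiagWTheta n W θ)ᴴ = 1 :=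
      mul_eq_one_comm.mp (bd_unitary hn W θ hW)
    have hcomm := bd_comm_diag W θ (fun i => ((σ i : ℝ) : ℂ))
      (fun i j hi hj => by exact_mod_cast hblk i j hi hj)
    rw [hA, hU₂eq, hV₂eq]
    rw [Matrix.conjTranspose_mul]
    symm
    calc U * blockDiagWTheta n W θ * diagonal (fun i => ((σ i : ℝ) : ℂ)) *
          ((blockDiagWTheta n W θ)ᴴ * Vᴴ)
        = U * (blockDiagWTheta n W θ * diagonal (fun i => ((σ i : ℝ) : ℂ)) *
            (blockDiagWTheta n W θ)ᴴ) * Vᴴ := by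
          simp only [Matrix.mul_assoc]
      _ = U * (diagonal (fun i => ((σ i : ℝ) : ℂ)) *
            (blockDiagWTheta n W θ * (blockDiagWTheta n W θ)ᴴ)) * Vᴴ := by
          rw [hcomm, Matrix.mul_assoc (diagonal fun i => ((σ i : ℝ) : ℂ))
            (blockDiagWTheta n W θ) (blockDiagWTheta n W θ)ᴴ]
      _ = U * diagonal (fun i => ((σ i : ℝ) : ℂ)) * Vᴴ := by
          rw [hBB, Matrix.mul_one, Matrix.mul_assoc]
end

section
/- Let S ∈ ℂ^(2n×2n) be conjugate symplectic with D = diag(d₁, …, dₙ, d₁⁻¹, …, dₙ⁻¹) where d₁ > d₂ > … > dₙ > 1 (so that all 2n singular values of S are distinct). Suppose S = U D V† and S = Ũ D Ṽ† are two Bloch–Messiah decompositions of S, i.e. U, V, Ũ, Ṽ are all unitary conjugate symplectic. Then there exist real numbers θ₁, …, θₙ such that Ũ = U Θ and Ṽ = V Θ, where Θ = diag(e^{iθ₁}, …, e^{iθₙ}, e^{iθ₁}, …, e^{iθₙ}). (Uniqueness of the Bloch–Messiah decomposition up to a repeated diagonal phase matrix.) -/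
open Matrix

/-- A matrix is unitary if `A† A = 1`. -/
def IsUnitaryMat {n : ℕ} (A : Matrix (Fin n ⊕ Fin n) (Fin n ⊕ Fin n) ℂ) : Prop :=
  Aᴴ * A = 1

/-- Uniqueness of the Bloch–Messiah decomposition up to a repeated diagonal phase
matrix `Θ = diag(e^{iθ₁}, …, e^{iθₙ}, e^{iθ₁}, …, e^{iθₙ})`, when all `2n` singular
values `d₁ > … > dₙ > 1 > dₙ⁻¹ > … > d₁⁻¹` are distinct. -/
theorem bloch_messiah_uniqueness (n : ℕ)
    (S U V U₂ V₂ : Matrix (Fin n ⊕ Fin n) (Fin n ⊕ Fin n) ℂ) (d : Fin n → ℝ)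
    (hS : ConjSymplectic S)
    (hdec : ∀ i j : Fin n, i < j → d j < d i) (hd1 : ∀ i : Fin n, 1 < d i)
    (hU : IsUnitaryMat U) (hUs : ConjSymplectic U)
    (hV : IsUnitaryMat V) (hVs : ConjSymplectic V)
    (hU₂ : IsUnitaryMat U₂) (hU₂s : ConjSymplectic U₂)
    (hV₂ : IsUnitaryMat V₂) (hV₂s : ConjSymplectic V₂)
    (hSUV : S = U *
      diagonal (Sum.elim (fun i => ((d i : ℝ) : ℂ)) (fun i => (((d i)⁻¹ : ℝ) : ℂ))) * Vᴴ)
    (hSUV₂ : S = U₂ *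
      diagonal (Sum.elim (fun i => ((d i : ℝ) : ℂ)) (fun i => (((d i)⁻¹ : ℝ) : ℂ))) * V₂ᴴ) :
    ∃ θ : Fin n → ℝ,
      U₂ = U * diagonal (Sum.elim (fun i => Complex.exp ((θ i : ℂ) * Complex.I))
                                  (fun i => Complex.exp ((θ i : ℂ) * Complex.I))) ∧
      V₂ = V * diagonal (Sum.elim (fun i => Complex.exp ((θ i : ℂ) * Complex.I))
                                  (fun i => Complex.exp ((θ i : ℂ) * Complex.I))) := by
    classical
  unfold IsUnitaryMat at hU hV hU₂ hV₂
  unfold ConjSymplectic at hUs hU₂s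
  set ρ : Fin n ⊕ Fin n → ℝ := Sum.elim d (fun i => (d i)⁻¹) with hρdef
  set δ : Fin n ⊕ Fin n → ℂ :=
    Sum.elim (fun i => ((d i : ℝ) : ℂ)) (fun i => (((d i)⁻¹ : ℝ) : ℂ)) with hδdef
  have hδρ : ∀ k, δ k = ((ρ k : ℝ) : ℂ) := by rintro (i|i) <;> rfl
  have hρpos : ∀ k, 0 < ρ k := by
    rintro (i|i)
    · exact lt_trans one_pos (hd1 i)
    · exact inv_pos.mpr (lt_trans one_pos (hd1 i))
  have hdinj : ∀ i j : Fin n, d i = d j → i = j := by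
    intro i j h
    rcases lt_trichotomy i j with hlt | he | hgt
    · exact absurd h (hdec i j hlt).ne'
    · exact he
    · exact absurd h (hdec j i hgt).ne
  have hinvlt : ∀ i : Fin n, (d i)⁻¹ < 1 := fun i => inv_lt_one_of_one_lt₀ (hd1 i)
  have hρinj : ∀ a b, ρ a = ρ b → a = b := by
    rintro (i|i) (j|j) h
    · exact congrArg Sum.inl (hdinj i j h)
    · exact absurd h (ne_of_gt (lt_trans (hinvlt j) (hd1 i)))
    · exact absurd h (ne_of_lt (lt_trans (hinvlt i) (hd1 j)))
    · exact congrArg Sum.inr (hdinj i j (inv_injective h))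
  have hδ0 : ∀ k, δ k ≠ 0 := by
    intro k
    rw [hδρ]
    exact_mod_cast (hρpos k).ne'
  have hδsq : ∀ a b, a ≠ b → δ a * δ a ≠ δ b * δ b := by
    intro a b hab h
    rw [hδρ a, hδρ b, ← Complex.ofReal_mul, ← Complex.ofReal_mul] at h
    have h' : ρ a * ρ a = ρ b * ρ b := by exact_mod_cast h
    exact hab (hρinj _ _ ((mul_self_inj (hρpos a).le (hρpos b).le).mp h'))
  set D : Matrix (Fin n ⊕ Fin n) (Fin n ⊕ Fin n) ℂ := diagonal δ with hDdef
  have hδstar : star δ = δ := by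
    funext k
    simp only [Pi.star_apply, hδρ k, Complex.star_def, Complex.conj_ofReal]
  have hDH : Dᴴ = D := by
    rw [hDdef, Matrix.diagonal_conjTranspose, hδstar]
  -- cancellation helpers
  have hUU : U * Uᴴ = 1 := mul_eq_one_comm.mp hU
  have hVV : V * Vᴴ = 1 := mul_eq_one_comm.mp hV
  have cUl : ∀ M, Uᴴ * (U * M) = M := fun M => by
    rw [← Matrix.mul_assoc, hU, Matrix.one_mul]
  have cUl' : ∀ M, U * (Uᴴ * M) = M := fun M => by
    rw [← Matrix.mul_assoc, hUU, Matrix.one_mul]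
  have cVl : ∀ M, Vᴴ * (V * M) = M := fun M => by
    rw [← Matrix.mul_assoc, hV, Matrix.one_mul]
  have cVl' : ∀ M, V * (Vᴴ * M) = M := fun M => by
    rw [← Matrix.mul_assoc, hVV, Matrix.one_mul]
  -- main equation
  have E : U * D * Vᴴ = U₂ * D * V₂ᴴ := hSUV.symm.trans hSUV₂
  set W : Matrix (Fin n ⊕ Fin n) (Fin n ⊕ Fin n) ℂ := Uᴴ * U₂ with hWdef
  set X : Matrix (Fin n ⊕ Fin n) (Fin n ⊕ Fin n) ℂ := Vᴴ * V₂ with hXdef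
  have hDX : D * X = W * D := by
    have h1 := congrArg (fun M => Uᴴ * (M * V₂)) E
    simp only [Matrix.mul_assoc] at h1
    rw [cUl, hV₂, Matrix.mul_one] at h1
    rw [hXdef, hWdef, Matrix.mul_assoc]
    exact h1
  have hDW : D * W = X * D := by
    have E' : V * D * Uᴴ = V₂ * D * U₂ᴴ := by
      have := congrArg Matrix.conjTranspose E
      simpa only [Matrix.conjTranspose_mul, Matrix.conjTranspose_conjTranspose, hDH,
        Matrix.mul_assoc] using this
    have h1 := congrArg (fun M => Vᴴ * (M * U₂)) E'
    simp only [Matrix.mul_assoc] at h1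
    rw [cVl, hU₂, Matrix.mul_one] at h1
    rw [hWdef, hXdef, Matrix.mul_assoc]
    exact h1
  -- W commutes with D²
  have hcomm : W * diagonal (fun k => δ k * δ k) = diagonal (fun k => δ k * δ k) * W := by
    have : W * (D * D) = D * D * W := by
      calc W * (D * D) = (W * D) * D := (Matrix.mul_assoc W D D).symm
        _ = (D * X) * D := by rw [hDX]
        _ = D * (X * D) := Matrix.mul_assoc D X D
        _ = D * (D * W) := by rw [hDW]
        _ = D * D * W := (Matrix.mul_assoc D D W).symm
    rwa [hDdef, Matrix.diagonal_mul_diagonal] at this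
  have Woff : ∀ i j, i ≠ j → W i j = 0 := by
    intro i j hij
    have h2 : W i j * (δ j * δ j) = (δ i * δ i) * W i j := by
      have := congrFun (congrFun hcomm i) j
      simpa [Matrix.mul_diagonal, Matrix.diagonal_mul] using this
    have h3 : W i j * (δ j * δ j - δ i * δ i) = 0 := by linear_combination h2
    rcases mul_eq_zero.mp h3 with h | h
    · exact h
    · exact absurd (sub_eq_zero.mp h) (hδsq j i (Ne.symm hij))
  have hXW : X = W := by
    ext i j
    have h := congrFun (congrFun hDX i) j
    rw [hDdef] at h
    simp only [Matrix.diagonal_mul, Matrix.mul_diagonal] at h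
    by_cases hij : i = j
    · subst hij
      rw [mul_comm (W i i) (δ i)] at h
      exact mul_left_cancel₀ (hδ0 i) h
    · rw [Woff i j hij]
      rw [Woff i j hij, zero_mul] at h
      exact (mul_eq_zero.mp h).resolve_left (hδ0 i)
  -- W unitary
  have hWU : Wᴴ * W = 1 := by
    rw [hWdef]
    simp only [Matrix.conjTranspose_mul, Matrix.conjTranspose_conjTranspose, Matrix.mul_assoc]
    rw [cUl', hU₂]
  -- W conjugate symplectic
  have hUsinv : Uᴴ * Omega n * U = Omega n := by
    conv_lhs => rw [← hUs]
    simp only [Matrix.mul_assoc]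
    rw [hU, Matrix.mul_one, cUl]
  have hWs : W * Omega n * Wᴴ = Omega n := by
    have c₂ : ∀ M, U₂ * (Omega n * (U₂ᴴ * M)) = Omega n * M := fun M => by
      rw [← Matrix.mul_assoc, ← Matrix.mul_assoc, hU₂s]
    rw [hWdef]
    simp only [Matrix.conjTranspose_mul, Matrix.conjTranspose_conjTranspose, Matrix.mul_assoc]
    rw [c₂, ← Matrix.mul_assoc, hUsinv]
  -- diagonal form of W
  have hWdiag : W = diagonal (fun k => W k k) := by
    ext i j
    by_cases hij : i = j
    · subst hij; simp [Matrix.diagonal_apply_eq]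
    · rw [Matrix.diagonal_apply_ne _ hij]; exact Woff i j hij
  have hunit : ∀ k, star (W k k) * W k k = 1 := by
    intro k
    have h := hWU
    rw [hWdiag, Matrix.diagonal_conjTranspose, Matrix.diagonal_mul_diagonal] at h
    have := congrFun (congrFun h k) k
    simpa [Matrix.diagonal_apply_eq, Matrix.one_apply_eq] using this
  have hphase : ∀ i : Fin n, W (Sum.inl i) (Sum.inl i) * star (W (Sum.inr i) (Sum.inr i)) = 1 := by
    intro i
    have h := hWs
    rw [hWdiag, Matrix.diagonal_conjTranspose] at h
    have h2 := congrFun (congrFun h (Sum.inl i)) (Sum.inr i)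
    simp only [Matrix.mul_diagonal, Matrix.diagonal_mul, Pi.star_apply] at h2
    simpa [Omega, Matrix.fromBlocks_apply₁₂, Matrix.one_apply_eq] using h2
  have heq : ∀ i : Fin n, W (Sum.inr i) (Sum.inr i) = W (Sum.inl i) (Sum.inl i) := by
    intro i
    calc W (Sum.inr i) (Sum.inr i)
        = (W (Sum.inl i) (Sum.inl i) * star (W (Sum.inr i) (Sum.inr i))) * W (Sum.inr i) (Sum.inr i) := by
          rw [hphase i, one_mul]
      _ = W (Sum.inl i) (Sum.inl i) * (star (W (Sum.inr i) (Sum.inr i)) * W (Sum.inr i) (Sum.inr i)) := by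
          ring
      _ = W (Sum.inl i) (Sum.inl i) := by rw [hunit, mul_one]
  have habs : ∀ k, ‖W k k‖ = 1 := by
    intro k
    have h := congrArg (‖·‖) (hunit k)
    simp only [Complex.star_def, norm_mul, norm_one, Complex.norm_conj] at h
    rcases mul_self_eq_one_iff.mp h with h1 | h1
    · exact h1
    · exfalso; linarith [norm_nonneg (W k k)]
  refine ⟨fun i => (W (Sum.inl i) (Sum.inl i)).arg, ?_, ?_⟩ <;>
  · have hexp : ∀ i : Fin n,
        Complex.exp ((((W (Sum.inl i) (Sum.inl i)).arg : ℝ) : ℂ) * Complex.I)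
          = W (Sum.inl i) (Sum.inl i) := by
      intro i
      have h := Complex.norm_mul_exp_arg_mul_I (W (Sum.inl i) (Sum.inl i))
      rwa [habs, Complex.ofReal_one, one_mul] at h
    have hWΘ : W = diagonal (Sum.elim
        (fun i => Complex.exp ((((W (Sum.inl i) (Sum.inl i)).arg : ℝ) : ℂ) * Complex.I))
        (fun i => Complex.exp ((((W (Sum.inl i) (Sum.inl i)).arg : ℝ) : ℂ) * Complex.I))) := by
      ext i j
      by_cases hij : i = j
      · subst hij
        rcases i with i | i
        · simp [Matrix.diagonal_apply_eq, hexp i]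
        · simp [Matrix.diagonal_apply_eq, hexp i, heq i]
      · rw [Matrix.diagonal_apply_ne _ hij]; exact Woff i j hij
    first
      | (rw [← hWΘ, hWdef, ← Matrix.mul_assoc, hUU, Matrix.one_mul])
      | (rw [← hWΘ, ← hXW, hXdef, ← Matrix.mul_assoc, hVV, Matrix.one_mul])
end

section
/- Let S ∈ ℂ^(2n×2n) be conjugate symplectic, and suppose S = U D V† is any singular value decomposition of S with U, V unitary and D = diag(d₁, …, dₙ, d₁⁻¹, …, dₙ⁻¹) where d₁ > d₂ > … > dₙ > 1. Then there exist real numbers θ₁, …, θₙ such that, setting Θ = diag(e^{−iθ₁/2}, …, e^{−iθₙ/2}, e^{iθ₁/2}, …, e^{iθₙ/2}), the matrices UΘ and VΘ are unitary conjugate symplectic and S = (UΘ) D (VΘ)†. (Correctness of the algorithm producing a Bloch–Messiah decomposition from an arbitrary SVD.) -/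
open Matrix

lemma omega_ct (n : ℕ) : (Omega n)ᴴ = -Omega n := by
  simp [Omega, Matrix.fromBlocks_conjTranspose, Matrix.fromBlocks_neg]

lemma omega_unit (n : ℕ) : (Omega n)ᴴ * Omega n = 1 := by
  rw [omega_ct]
  simp only [Omega, Matrix.fromBlocks_neg, Matrix.fromBlocks_multiply]
  simp [← Matrix.fromBlocks_one]

lemma sandwich {m : Type*} [Fintype m] [DecidableEq m]
    (W A B : Matrix m m ℂ) (hW : W * Wᴴ = 1) :
    (Wᴴ * A * W) * (Wᴴ * B * W) = Wᴴ * (A * B) * W := by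
  simp only [Matrix.mul_assoc]
  rw [show W * (Wᴴ * (B * W)) = B * W by rw [← Matrix.mul_assoc, hW, Matrix.one_mul]]

lemma star_exp_I (x : ℝ) : star (Complex.exp ((x:ℂ) * Complex.I)) = Complex.exp (-(x:ℂ) * Complex.I) := by
  rw [show star (Complex.exp ((x:ℂ) * Complex.I)) = (starRingEnd ℂ) (Complex.exp ((x:ℂ) * Complex.I)) from rfl,
    ← Complex.exp_conj]
  congr 1
  simp [Complex.conj_I, Complex.conj_ofReal]

lemma star_exp_I' (x : ℝ) : star (Complex.exp (-(x:ℂ) * Complex.I)) = Complex.exp ((x:ℂ) * Complex.I) := by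
  have := star_exp_I (-x)
  push_cast at this
  simpa using this


set_option maxHeartbeats 1000000 in
/-- Correctness of the algorithm producing a Bloch–Messiah decomposition from an
arbitrary SVD of a conjugate symplectic matrix with distinct singular values:
there are phases `θ₁, …, θₙ` such that, with
`Θ = diag(e^{−iθ₁/2}, …, e^{−iθₙ/2}, e^{iθ₁/2}, …, e^{iθₙ/2})`, the matrices `UΘ`,
`VΘ` are unitary conjugate symplectic and `S = (UΘ) D (VΘ)†`. -/
theorem bloch_messiah_from_svd (n : ℕ)
    (S U V : Matrix (Fin n ⊕ Fin n) (Fin n ⊕ Fin n) ℂ) (d : Fin n → ℝ)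
    (hS : ConjSymplectic S)
    (hU : IsUnitaryMat U) (hV : IsUnitaryMat V)
    (hdec : ∀ i j : Fin n, i < j → d j < d i) (hd1 : ∀ i : Fin n, 1 < d i)
    (hSUV : S = U *
      diagonal (Sum.elim (fun i => ((d i : ℝ) : ℂ)) (fun i => (((d i)⁻¹ : ℝ) : ℂ))) * Vᴴ) :
    ∃ θ : Fin n → ℝ,
      IsUnitaryMat (U * diagonal (Sum.elim
          (fun i => Complex.exp (-((θ i / 2 : ℝ) : ℂ) * Complex.I))
          (fun i => Complex.exp (((θ i / 2 : ℝ) : ℂ) * Complex.I)))) ∧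
      ConjSymplectic (U * diagonal (Sum.elim
          (fun i => Complex.exp (-((θ i / 2 : ℝ) : ℂ) * Complex.I))
          (fun i => Complex.exp (((θ i / 2 : ℝ) : ℂ) * Complex.I)))) ∧
      IsUnitaryMat (V * diagonal (Sum.elim
          (fun i => Complex.exp (-((θ i / 2 : ℝ) : ℂ) * Complex.I))
          (fun i => Complex.exp (((θ i / 2 : ℝ) : ℂ) * Complex.I)))) ∧
      ConjSymplectic (V * diagonal (Sum.elim
          (fun i => Complex.exp (-((θ i / 2 : ℝ) : ℂ) * Complex.I))
          (fun i => Complex.exp (((θ i / 2 : ℝ) : ℂ) * Complex.I)))) ∧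
      S = (U * diagonal (Sum.elim
          (fun i => Complex.exp (-((θ i / 2 : ℝ) : ℂ) * Complex.I))
          (fun i => Complex.exp (((θ i / 2 : ℝ) : ℂ) * Complex.I)))) *
        diagonal (Sum.elim (fun i => ((d i : ℝ) : ℂ)) (fun i => (((d i)⁻¹ : ℝ) : ℂ))) *
        (V * diagonal (Sum.elim
          (fun i => Complex.exp (-((θ i / 2 : ℝ) : ℂ) * Complex.I))
          (fun i => Complex.exp (((θ i / 2 : ℝ) : ℂ) * Complex.I))))ᴴ := by
  classical
  have hd0 : ∀ i, (0:ℝ) < d i := fun i => lt_trans one_pos (hd1 i)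
  have hdne : ∀ i, (d i) ≠ 0 := fun i => ne_of_gt (hd0 i)
  have hdinj : ∀ i i' : Fin n, i ≠ i' → d i ≠ d i' := by
    intro i i' hne
    rcases hne.lt_or_gt with h | h
    · exact ne_of_gt (hdec i i' h)
    · exact ne_of_lt (hdec i' i h)
  set fC : Fin n ⊕ Fin n → ℂ :=
    Sum.elim (fun i => ((d i : ℝ) : ℂ)) (fun i => (((d i)⁻¹ : ℝ) : ℂ)) with hfC
  set eC : Fin n ⊕ Fin n → ℂ :=
    Sum.elim (fun i => (((d i)⁻¹ : ℝ) : ℂ)) (fun i => ((d i : ℝ) : ℂ)) with heC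
  set Dd : Matrix (Fin n ⊕ Fin n) (Fin n ⊕ Fin n) ℂ := diagonal fC with hDd
  set E : Matrix (Fin n ⊕ Fin n) (Fin n ⊕ Fin n) ℂ := diagonal eC with hE
  have hDE : Dd * E = 1 := by
    rw [hDd, hE, diagonal_mul_diagonal,
      show (fun j => fC j * eC j) = fun _ => (1:ℂ) from by
        funext j
        cases j with
        | inl i =>
            show ((d i : ℝ) : ℂ) * (((d i)⁻¹ : ℝ) : ℂ) = 1
            push_cast
            exact mul_inv_cancel₀ (by exact_mod_cast hdne i)
        | inr i =>
            show (((d i)⁻¹ : ℝ) : ℂ) * ((d i : ℝ) : ℂ) = 1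
            push_cast
            exact inv_mul_cancel₀ (by exact_mod_cast hdne i),
      Matrix.diagonal_one]
  have hED : E * Dd = 1 := mul_eq_one_comm.mp hDE
  have hDH : Ddᴴ = Dd := by
    rw [hDd, diagonal_conjTranspose,
      show star fC = fC from by
        funext j
        cases j <;> simp [hfC, Complex.conj_ofReal]]
  have hEH : Eᴴ = E := by
    rw [hE, diagonal_conjTranspose,
      show star eC = eC from by
        funext j
        cases j <;> simp [heC, Complex.conj_ofReal]]
  have hU1 : Uᴴ * U = 1 := hU
  have hV1 : Vᴴ * V = 1 := hV
  have hU' : U * Uᴴ = 1 := mul_eq_one_comm.mp hU1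
  have hV' : V * Vᴴ = 1 := mul_eq_one_comm.mp hV1
  set P : Matrix (Fin n ⊕ Fin n) (Fin n ⊕ Fin n) ℂ := Uᴴ * Omega n * U with hPdef
  set Q : Matrix (Fin n ⊕ Fin n) (Fin n ⊕ Fin n) ℂ := Vᴴ * Omega n * V with hQdef
  have hPH : Pᴴ = -P := by
    rw [hPdef]
    simp only [conjTranspose_mul, conjTranspose_conjTranspose, omega_ct n, Matrix.mul_neg,
      Matrix.neg_mul, Matrix.mul_assoc]
  have hPH' : Pᴴ = Uᴴ * (Omega n)ᴴ * U := by
    rw [hPdef]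
    simp only [conjTranspose_mul, conjTranspose_conjTranspose, Matrix.mul_assoc]
  have hQH' : Qᴴ = Vᴴ * (Omega n)ᴴ * V := by
    rw [hQdef]
    simp only [conjTranspose_mul, conjTranspose_conjTranspose, Matrix.mul_assoc]
  have hPP : Pᴴ * P = 1 := by
    rw [hPH', hPdef, sandwich U _ _ hU', omega_unit, Matrix.mul_one, hU1]
  have hQQ : Qᴴ * Q = 1 := by
    rw [hQH', hQdef, sandwich V _ _ hV', omega_unit, Matrix.mul_one, hV1]
  have hPP' : P * Pᴴ = 1 := mul_eq_one_comm.mp hPP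
  have hQQ' : Q * Qᴴ = 1 := mul_eq_one_comm.mp hQQ
  have hS' : S * Omega n * Sᴴ = Omega n := hS
  have hSH : Sᴴ = V * Dd * Uᴴ := by
    rw [hSUV]
    simp only [conjTranspose_mul, conjTranspose_conjTranspose, hDH, Matrix.mul_assoc]
  have hmain : U * (Dd * Q * Dd) * Uᴴ = Omega n := by
    have h0 : (U * Dd * Vᴴ) * Omega n * (V * Dd * Uᴴ) = Omega n := by
      rw [← hSUV, ← hSH]; exact hS'
    calc U * (Dd * Q * Dd) * Uᴴ = (U * Dd * Vᴴ) * Omega n * (V * Dd * Uᴴ) := by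
          rw [hQdef]; simp only [Matrix.mul_assoc]
      _ = Omega n := h0
  have hPDQD : P = Dd * Q * Dd := by
    rw [hPdef, ← hmain]
    calc Uᴴ * (U * (Dd * Q * Dd) * Uᴴ) * U
        = (Uᴴ * U) * (Dd * Q * Dd) * (Uᴴ * U) := by simp only [Matrix.mul_assoc]
      _ = Dd * Q * Dd := by rw [hU1, Matrix.one_mul, Matrix.mul_one]
  have hQEPE : Q = E * P * E := by
    rw [hPDQD,
      show E * (Dd * Q * Dd) * E = (E * Dd) * Q * (Dd * E) from by simp only [Matrix.mul_assoc],
      hED, hDE, Matrix.one_mul, Matrix.mul_one]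
  have hQH2 : Qᴴ = E * Pᴴ * E := by
    rw [hQEPE]
    simp only [conjTranspose_mul, hEH, Matrix.mul_assoc]
  have h1 : E * (P * (E * E) * Pᴴ) * E = 1 := by
    calc E * (P * (E * E) * Pᴴ) * E = (E * P * E) * (E * Pᴴ * E) := by
          simp only [Matrix.mul_assoc]
      _ = Q * Qᴴ := by rw [← hQEPE, ← hQH2]
      _ = 1 := hQQ'
  have h2 : P * (E * E) * Pᴴ = Dd * Dd := by
    calc P * (E * E) * Pᴴ
        = (Dd * E) * (P * (E * E) * Pᴴ) * (E * Dd) := by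
          rw [hDE, hED, Matrix.one_mul, Matrix.mul_one]
      _ = Dd * (E * (P * (E * E) * Pᴴ) * E) * Dd := by simp only [Matrix.mul_assoc]
      _ = Dd * Dd := by rw [h1, Matrix.mul_one]
  have hkey : P * (E * E) = (Dd * Dd) * P := by
    calc P * (E * E) = P * (E * E) * (Pᴴ * P) := by rw [hPP, Matrix.mul_one]
      _ = (P * (E * E) * Pᴴ) * P := by simp only [Matrix.mul_assoc]
      _ = (Dd * Dd) * P := by rw [h2]
  rw [hDd, hE, diagonal_mul_diagonal, diagonal_mul_diagonal] at hkey
  have hent : ∀ j k, P j k * (eC k * eC k) = (fC j * fC j) * P j k := by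
    intro j k
    have h := Matrix.ext_iff.mpr hkey j k
    rw [Matrix.mul_diagonal, Matrix.diagonal_mul] at h
    exact h
  have hz : ∀ j k, eC k * eC k ≠ fC j * fC j → P j k = 0 := by
    intro j k hne
    by_contra hP
    exact hne (mul_left_cancel₀ hP ((hent j k).trans (mul_comm _ _)))
  -- vanishing of the four regions
  have hcast : ∀ x y : ℝ, x ≠ y → ((x:ℂ) ≠ (y:ℂ)) := fun x y h => by exact_mod_cast h
  have hPll : ∀ i i', P (Sum.inl i) (Sum.inl i') = 0 := by
    intro i i'
    refine hz _ _ ?_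
    simp only [heC, hfC, Sum.elim_inl]
    rw [show ((((d i')⁻¹ : ℝ) : ℂ) * (((d i')⁻¹ : ℝ) : ℂ)) = ((((d i')⁻¹ * (d i')⁻¹ : ℝ)) : ℂ) from by push_cast; ring,
      show (((d i : ℝ) : ℂ) * ((d i : ℝ) : ℂ)) = (((d i * d i : ℝ)) : ℂ) from by push_cast; ring]
    apply hcast
    have h1 : (d i')⁻¹ < 1 := by
      rw [inv_lt_one_iff₀]; right; exact hd1 i'
    have h2 : (0:ℝ) < (d i')⁻¹ := inv_pos.mpr (hd0 i')
    nlinarith [hd1 i]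
  have hPrr : ∀ i i', P (Sum.inr i) (Sum.inr i') = 0 := by
    intro i i'
    refine hz _ _ ?_
    simp only [heC, hfC, Sum.elim_inr]
    rw [show (((d i' : ℝ) : ℂ) * ((d i' : ℝ) : ℂ)) = (((d i' * d i' : ℝ)) : ℂ) from by push_cast; ring,
      show ((((d i)⁻¹ : ℝ) : ℂ) * (((d i)⁻¹ : ℝ) : ℂ)) = ((((d i)⁻¹ * (d i)⁻¹ : ℝ)) : ℂ) from by push_cast; ring]
    apply hcast
    have h1 : (d i)⁻¹ < 1 := by
      rw [inv_lt_one_iff₀]; right; exact hd1 i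
    have h2 : (0:ℝ) < (d i)⁻¹ := inv_pos.mpr (hd0 i)
    nlinarith [hd1 i']
  have hPlr : ∀ i i', i ≠ i' → P (Sum.inl i) (Sum.inr i') = 0 := by
    intro i i' hne
    refine hz _ _ ?_
    simp only [heC, hfC, Sum.elim_inl, Sum.elim_inr]
    rw [show (((d i' : ℝ) : ℂ) * ((d i' : ℝ) : ℂ)) = (((d i' * d i' : ℝ)) : ℂ) from by push_cast; ring,
      show (((d i : ℝ) : ℂ) * ((d i : ℝ) : ℂ)) = (((d i * d i : ℝ)) : ℂ) from by push_cast; ring]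
    apply hcast
    intro h
    rcases (hdinj i i' hne).lt_or_gt with hlt | hlt <;> nlinarith [hd0 i, hd0 i']
  have hPrl : ∀ i i', i ≠ i' → P (Sum.inr i) (Sum.inl i') = 0 := by
    intro i i' hne
    refine hz _ _ ?_
    simp only [heC, hfC, Sum.elim_inl, Sum.elim_inr]
    rw [show ((((d i')⁻¹ : ℝ) : ℂ) * (((d i')⁻¹ : ℝ) : ℂ)) = ((((d i')⁻¹ * (d i')⁻¹ : ℝ)) : ℂ) from by push_cast; ring,
      show ((((d i)⁻¹ : ℝ) : ℂ) * (((d i)⁻¹ : ℝ) : ℂ)) = ((((d i)⁻¹ * (d i)⁻¹ : ℝ)) : ℂ) from by push_cast; ring]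
    apply hcast
    intro h
    have hi : (0:ℝ) < (d i)⁻¹ := inv_pos.mpr (hd0 i)
    have hi' : (0:ℝ) < (d i')⁻¹ := inv_pos.mpr (hd0 i')
    have h' : (d i)⁻¹ ≠ (d i')⁻¹ := by
      intro hh
      exact hdinj i i' hne (by
        have := congrArg (fun x => x⁻¹) hh
        simpa [inv_inv] using this)
    rcases h'.lt_or_gt with hlt | hlt <;> nlinarith
  -- the anti-diagonal entries
  set a : Fin n → ℂ := fun i => P (Sum.inl i) (Sum.inr i) with ha
  have haa : ∀ i, a i * star (a i) = 1 := by
    intro i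
    have h := Matrix.ext_iff.mpr hPP' (Sum.inl i) (Sum.inl i)
    rw [Matrix.mul_apply, Fintype.sum_sum_type] at h
    simp only [conjTranspose_apply] at h
    have e1 : ∑ i' : Fin n, P (Sum.inl i) (Sum.inl i') * star (P (Sum.inl i) (Sum.inl i')) = 0 :=
      Finset.sum_eq_zero fun i' _ => by rw [hPll i i']; simp
    have e2 : ∑ i' : Fin n, P (Sum.inl i) (Sum.inr i') * star (P (Sum.inl i) (Sum.inr i'))
        = a i * star (a i) := by
      rw [Finset.sum_eq_single i
        (fun b _ hb => by rw [hPlr i b (fun hh => hb hh.symm)]; simp)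
        (fun hh => absurd (Finset.mem_univ i) hh)]
    rw [e1, e2, zero_add] at h
    rw [h]
    simp [Matrix.one_apply]
  have hanorm : ∀ i, ‖a i‖ = 1 := by
    intro i
    have h := haa i
    rw [show star (a i) = (starRingEnd ℂ) (a i) from rfl, Complex.mul_conj] at h
    have hn : Complex.normSq (a i) = 1 := by exact_mod_cast h
    rw [Complex.norm_def, hn, Real.sqrt_one]
  have hexp : ∀ i, Complex.exp ((Complex.arg (a i) : ℂ) * Complex.I) = a i := by
    intro i
    have h := Complex.norm_mul_exp_arg_mul_I (a i)
    rw [hanorm i] at h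
    simpa using h
  have hskew : ∀ i, P (Sum.inr i) (Sum.inl i) = -star (a i) := by
    intro i
    have h := Matrix.ext_iff.mpr hPH (Sum.inl i) (Sum.inr i)
    simp only [conjTranspose_apply, Matrix.neg_apply] at h
    have h2 := congrArg star h
    rw [star_star] at h2
    rw [h2, ha]
    simp
  -- choose the phases
  set θ : Fin n → ℝ := fun i => -(Complex.arg (a i)) with hθ
  set t : Fin n ⊕ Fin n → ℂ := Sum.elim
      (fun i => Complex.exp (-((θ i / 2 : ℝ) : ℂ) * Complex.I))
      (fun i => Complex.exp (((θ i / 2 : ℝ) : ℂ) * Complex.I)) with htdef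
  have hea : ∀ i, Complex.exp (-((θ i / 2 : ℝ) : ℂ) * Complex.I) *
      Complex.exp (-((θ i / 2 : ℝ) : ℂ) * Complex.I) = a i := by
    intro i
    rw [← Complex.exp_add, ← hexp i]
    congr 1
    rw [hθ]
    push_cast
    ring
  have heb : ∀ i, Complex.exp (((θ i / 2 : ℝ) : ℂ) * Complex.I) *
      Complex.exp (((θ i / 2 : ℝ) : ℂ) * Complex.I) = star (a i) := by
    intro i
    have hexp2 : ((θ i / 2 : ℝ) : ℂ) * Complex.I + ((θ i / 2 : ℝ) : ℂ) * Complex.I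
        = -((Complex.arg (a i) : ℝ) : ℂ) * Complex.I := by
      rw [hθ]; push_cast; ring
    have h : Complex.exp (-((Complex.arg (a i) : ℝ) : ℂ) * Complex.I) = star (a i) := by
      rw [← star_exp_I]
      exact congrArg star (hexp i)
    rw [← Complex.exp_add, hexp2, h]
  have ht1 : ∀ j, star (t j) * t j = 1 := by
    intro j
    cases j with
    | inl i =>
        rw [htdef]
        simp only [Sum.elim_inl]
        rw [star_exp_I', ← Complex.exp_add]
        push_cast
        ring_nf
        exact Complex.exp_zero
    | inr i =>
        rw [htdef]
        simp only [Sum.elim_inr]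
        rw [star_exp_I, ← Complex.exp_add]
        push_cast
        ring_nf
        exact Complex.exp_zero
  have hTunit : (diagonal t)ᴴ * diagonal t = 1 := by
    rw [diagonal_conjTranspose, diagonal_mul_diagonal,
      show (fun j => (star t) j * t j) = fun _ => (1:ℂ) from funext fun j => ht1 j,
      Matrix.diagonal_one]
  have hTunit' : diagonal t * (diagonal t)ᴴ = 1 := mul_eq_one_comm.mp hTunit
  -- the central computation : T Ω Tᴴ = P
  have hTOT : diagonal t * Omega n * (diagonal t)ᴴ = P := by
    rw [diagonal_conjTranspose]
    ext j k
    rw [Matrix.mul_diagonal, Matrix.diagonal_mul]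
    cases j with
    | inl i =>
        cases k with
        | inl i' =>
            rw [show Omega n (Sum.inl i) (Sum.inl i') = 0 from by
              simp [Omega, Matrix.fromBlocks_apply₁₁]]
            rw [hPll i i']
            ring
        | inr i' =>
            rw [show Omega n (Sum.inl i) (Sum.inr i') = if i = i' then 1 else 0 from by
              simp [Omega, Matrix.fromBlocks_apply₁₂, Matrix.one_apply]]
            by_cases hii : i = i'
            · subst hii
              rw [if_pos rfl]
              show t (Sum.inl i) * 1 * star (t (Sum.inr i)) = P (Sum.inl i) (Sum.inr i)
              rw [htdef]
              simp only [Sum.elim_inl, Sum.elim_inr]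
              rw [star_exp_I, mul_one, hea i, ha]
            · rw [if_neg hii, hPlr i i' hii]
              ring
    | inr i =>
        cases k with
        | inl i' =>
            rw [show Omega n (Sum.inr i) (Sum.inl i') = if i = i' then -1 else 0 from by
              simp [Omega, Matrix.fromBlocks_apply₂₁, Matrix.one_apply]
              split <;> simp]
            by_cases hii : i = i'
            · subst hii
              rw [if_pos rfl, hskew i]
              show t (Sum.inr i) * (-1) * star (t (Sum.inl i)) = -star (a i)
              rw [htdef]
              simp only [Sum.elim_inl, Sum.elim_inr]
              rw [star_exp_I', mul_neg_one, neg_mul, heb i]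
            · rw [if_neg hii, hPrl i i' hii]
              ring
        | inr i' =>
            rw [show Omega n (Sum.inr i) (Sum.inr i') = 0 from by
              simp [Omega, Matrix.fromBlocks_apply₂₂]]
            rw [hPrr i i']
            ring
  -- Q equals P
  have hQP : Q = P := by
    rw [hQEPE, hE]
    ext j k
    rw [Matrix.mul_diagonal, Matrix.diagonal_mul]
    cases j with
    | inl i =>
        cases k with
        | inl i' => rw [hPll i i']; ring
        | inr i' =>
            by_cases hii : i = i'
            · subst hii
              rw [heC]
              simp only [Sum.elim_inl, Sum.elim_inr]
              rw [show ((((d i)⁻¹ : ℝ) : ℂ)) = (((d i) : ℝ) : ℂ)⁻¹ from by push_cast; ring]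
              have hne : ((d i : ℝ) : ℂ) ≠ 0 := by exact_mod_cast hdne i
              field_simp
            · rw [hPlr i i' hii]; ring
    | inr i =>
        cases k with
        | inl i' =>
            by_cases hii : i = i'
            · subst hii
              rw [heC]
              simp only [Sum.elim_inl, Sum.elim_inr]
              rw [show ((((d i)⁻¹ : ℝ) : ℂ)) = (((d i) : ℝ) : ℂ)⁻¹ from by push_cast; ring]
              have hne : ((d i : ℝ) : ℂ) ≠ 0 := by exact_mod_cast hdne i
              field_simp
            · rw [hPrl i i' hii]; ring
        | inr i' => rw [hPrr i i']; ring
  -- assemble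
  have hTD : diagonal t * Dd = Dd * diagonal t := by
    rw [hDd, diagonal_mul_diagonal, diagonal_mul_diagonal,
      show (fun j => t j * fC j) = fun j => fC j * t j from funext fun j => mul_comm _ _]
  have g1 : IsUnitaryMat (U * diagonal t) := by
    show (U * diagonal t)ᴴ * (U * diagonal t) = 1
    rw [conjTranspose_mul]
    calc (diagonal t)ᴴ * Uᴴ * (U * diagonal t)
        = (diagonal t)ᴴ * ((Uᴴ * U) * diagonal t) := by simp only [Matrix.mul_assoc]
      _ = 1 := by rw [hU1, Matrix.one_mul]; exact hTunit
  have g3 : IsUnitaryMat (V * diagonal t) := by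
    show (V * diagonal t)ᴴ * (V * diagonal t) = 1
    rw [conjTranspose_mul]
    calc (diagonal t)ᴴ * Vᴴ * (V * diagonal t)
        = (diagonal t)ᴴ * ((Vᴴ * V) * diagonal t) := by simp only [Matrix.mul_assoc]
      _ = 1 := by rw [hV1, Matrix.one_mul]; exact hTunit
  have g2 : ConjSymplectic (U * diagonal t) := by
    show (U * diagonal t) * Omega n * (U * diagonal t)ᴴ = Omega n
    rw [conjTranspose_mul]
    calc U * diagonal t * Omega n * ((diagonal t)ᴴ * Uᴴ)
        = U * (diagonal t * Omega n * (diagonal t)ᴴ) * Uᴴ := by simp only [Matrix.mul_assoc]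
      _ = U * P * Uᴴ := by rw [hTOT]
      _ = Omega n := by
          rw [hPdef]
          calc U * (Uᴴ * Omega n * U) * Uᴴ
              = (U * Uᴴ) * Omega n * (U * Uᴴ) := by simp only [Matrix.mul_assoc]
            _ = Omega n := by rw [hU', Matrix.one_mul, Matrix.mul_one]
  have g4 : ConjSymplectic (V * diagonal t) := by
    show (V * diagonal t) * Omega n * (V * diagonal t)ᴴ = Omega n
    rw [conjTranspose_mul]
    calc V * diagonal t * Omega n * ((diagonal t)ᴴ * Vᴴ)
        = V * (diagonal t * Omega n * (diagonal t)ᴴ) * Vᴴ := by simp only [Matrix.mul_assoc]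
      _ = V * P * Vᴴ := by rw [hTOT]
      _ = Omega n := by
          rw [← hQP, hQdef]
          calc V * (Vᴴ * Omega n * V) * Vᴴ
              = (V * Vᴴ) * Omega n * (V * Vᴴ) := by simp only [Matrix.mul_assoc]
            _ = Omega n := by rw [hV', Matrix.one_mul, Matrix.mul_one]
  have g5 : S = (U * diagonal t) * Dd * (V * diagonal t)ᴴ := by
    rw [conjTranspose_mul]
    have hmid : diagonal t * Dd * (diagonal t)ᴴ = Dd := by
      rw [hTD, Matrix.mul_assoc, hTunit', Matrix.mul_one]
    calc S = U * Dd * Vᴴ := hSUV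
      _ = U * (diagonal t * Dd * (diagonal t)ᴴ) * Vᴴ := by rw [hmid]
      _ = (U * diagonal t) * Dd * ((diagonal t)ᴴ * Vᴴ) := by simp only [Matrix.mul_assoc]
  exact ⟨θ, g1, g2, g3, g4, g5⟩
end

section
/- Let n ≥ 1, let γ₁, …, γₙ > 0, set Γ = diag(γ₁, …, γₙ, γ₁, …, γₙ) ∈ ℝ^(2n×2n) and √(2Γ) = diag(√(2γ₁), …, √(2γₙ), √(2γ₁), …, √(2γₙ)), and let 𝓜 ∈ ℝ^(2n×2n) be Hamiltonian, i.e. (Ω𝓜)ᵀ = Ω𝓜 where Ω = [[0, Iₙ], [−Iₙ, 0]]. For ω ∈ ℝ such that iωI + Γ − 𝓜 is invertible (as a complex matrix), define S(ω) = √(2Γ)(iωI + Γ − 𝓜)⁻¹√(2Γ) − I. Then S(ω) is conjugate symplectic: S(ω) Ω S(ω)† = Ω. -/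
open Matrix

/-- The standard `2n × 2n` symplectic form over ℝ. -/
def OmegaR (n : ℕ) : Matrix (Fin n ⊕ Fin n) (Fin n ⊕ Fin n) ℝ :=
  Matrix.fromBlocks 0 1 (-1) 0

/-- The transfer function `S(ω) = √(2Γ)(iωI + Γ − 𝓜)⁻¹√(2Γ) − I` with paired damping
rates `Γ = diag(γ₁, …, γₙ, γ₁, …, γₙ)`. -/
noncomputable def transferFun (n : ℕ) (γ : Fin n → ℝ)
    (M : Matrix (Fin n ⊕ Fin n) (Fin n ⊕ Fin n) ℝ) (ω : ℝ) :
    Matrix (Fin n ⊕ Fin n) (Fin n ⊕ Fin n) ℂ :=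
  diagonal (fun i => ((Real.sqrt (2 * Sum.elim γ γ i) : ℝ) : ℂ)) *
    ((Complex.I * (ω : ℂ)) • (1 : Matrix (Fin n ⊕ Fin n) (Fin n ⊕ Fin n) ℂ) +
      diagonal (fun i => ((Sum.elim γ γ i : ℝ) : ℂ)) - M.map Complex.ofReal)⁻¹ *
    diagonal (fun i => ((Real.sqrt (2 * Sum.elim γ γ i) : ℝ) : ℂ)) - 1

section aux

variable {n : ℕ}

lemma neg_one_blocks {α : Type*} [Ring α] {l m : Type*} [DecidableEq l] [DecidableEq m] :
    (-1 : Matrix (l ⊕ m) (l ⊕ m) α) = Matrix.fromBlocks (-1) 0 0 (-1) := by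
  rw [← Matrix.fromBlocks_one, Matrix.fromBlocks_neg]
  simp

lemma omega_sq : Omega n * Omega n = -1 := by
  rw [Omega, Matrix.fromBlocks_multiply, neg_one_blocks]
  simp

lemma omegaR_sq : OmegaR n * OmegaR n = -1 := by
  rw [OmegaR, Matrix.fromBlocks_multiply, neg_one_blocks]
  simp

lemma omega_isUnit : IsUnit (Omega n) := by
  have h1 : Omega n * (-(Omega n)) = 1 := by rw [mul_neg, omega_sq, neg_neg]
  have h2 : (-(Omega n)) * Omega n = 1 := by rw [neg_mul, omega_sq, neg_neg]
  exact ⟨⟨Omega n, -(Omega n), h1, h2⟩, rfl⟩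

lemma omega_mul_diagonal (f : Fin n → ℂ) :
    Omega n * diagonal (Sum.elim f f) = diagonal (Sum.elim f f) * Omega n := by
  rw [← Matrix.fromBlocks_diagonal, Omega, Matrix.fromBlocks_multiply,
    Matrix.fromBlocks_multiply]
  simp

lemma omega_eq_map : Omega n = (OmegaR n).map Complex.ofReal := by
  ext i j
  cases i <;> cases j <;>
    simp [Omega, OmegaR, Matrix.map_apply, Matrix.one_apply, Matrix.neg_apply,
      Matrix.fromBlocks_apply₁₁, Matrix.fromBlocks_apply₁₂,
      Matrix.fromBlocks_apply₂₁, Matrix.fromBlocks_apply₂₂, apply_ite]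

/-- Purely algebraic core of the theorem. -/
lemma transfer_alg {m : Type*} [Fintype m] [DecidableEq m]
    (D A C O : Matrix m m ℂ) (hA : IsUnit A) (hC : IsUnit C)
    (hsum : A + C = D * D) (hDO : O * D = D * O) (hDH : Dᴴ = D)
    (hOA : O * Aᴴ = C * O) :
    (D * A⁻¹ * D - 1) * O * (D * A⁻¹ * D - 1)ᴴ = O := by
  have hAd : IsUnit A.det := (Matrix.isUnit_iff_isUnit_det A).mp hA
  have hCd : IsUnit C.det := (Matrix.isUnit_iff_isUnit_det C).mp hC
  have hAH : IsUnit Aᴴ.det := by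
    rw [Matrix.det_conjTranspose]; exact hAd.star
  have hSH : (D * A⁻¹ * D - 1)ᴴ = D * Aᴴ⁻¹ * D - 1 := by
    simp [Matrix.conjTranspose_sub, Matrix.conjTranspose_mul, hDH,
      Matrix.conjTranspose_nonsing_inv, mul_assoc]
  have hOAinv : O * Aᴴ⁻¹ = C⁻¹ * O := by
    have h1 : O = C * O * Aᴴ⁻¹ := by
      rw [← hOA, mul_assoc, Matrix.mul_nonsing_inv _ hAH, mul_one]
    calc O * Aᴴ⁻¹ = (C⁻¹ * C) * O * Aᴴ⁻¹ := by
          rw [Matrix.nonsing_inv_mul _ hCd, one_mul]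
      _ = C⁻¹ * (C * O * Aᴴ⁻¹) := by noncomm_ring
      _ = C⁻¹ * O := by rw [← h1]
  rw [hSH]
  have key : (D * A⁻¹ * D - 1) * (D * C⁻¹ * D - 1) = 1 := by
    have h2 : (D * A⁻¹ * D) * (D * C⁻¹ * D) = D * C⁻¹ * D + D * A⁻¹ * D := by
      have : (D * A⁻¹ * D) * (D * C⁻¹ * D) = D * (A⁻¹ * ((A + C) * C⁻¹)) * D := by
        rw [hsum]; noncomm_ring
      have e1 : A⁻¹ * (A * C⁻¹) = C⁻¹ := by
        rw [← mul_assoc, Matrix.nonsing_inv_mul _ hAd, one_mul]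
      rw [this, add_mul, Matrix.mul_nonsing_inv _ hCd, mul_add, mul_one, e1]
      noncomm_ring
    calc (D * A⁻¹ * D - 1) * (D * C⁻¹ * D - 1)
        = (D * A⁻¹ * D) * (D * C⁻¹ * D) - D * A⁻¹ * D - (D * C⁻¹ * D) + 1 := by
          noncomm_ring
      _ = 1 := by rw [h2]; abel
  have hstep : O * (D * Aᴴ⁻¹ * D - 1) = (D * C⁻¹ * D - 1) * O := by
    have : O * (D * Aᴴ⁻¹ * D) = (D * C⁻¹ * D) * O := by
      calc O * (D * Aᴴ⁻¹ * D) = (O * D) * Aᴴ⁻¹ * D := by noncomm_ring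
        _ = D * (O * Aᴴ⁻¹) * D := by rw [hDO]; noncomm_ring
        _ = D * C⁻¹ * (O * D) := by rw [hOAinv]; noncomm_ring
        _ = (D * C⁻¹ * D) * O := by rw [hDO]; noncomm_ring
    rw [mul_sub, sub_mul, this, mul_one, one_mul]
  calc (D * A⁻¹ * D - 1) * O * (D * Aᴴ⁻¹ * D - 1)
      = (D * A⁻¹ * D - 1) * (O * (D * Aᴴ⁻¹ * D - 1)) := by noncomm_ring
    _ = (D * A⁻¹ * D - 1) * ((D * C⁻¹ * D - 1) * O) := by rw [hstep]
    _ = ((D * A⁻¹ * D - 1) * (D * C⁻¹ * D - 1)) * O := by noncomm_ring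
    _ = O := by rw [key, one_mul]

end aux

/-- If `𝓜` is a real Hamiltonian matrix (`(Ω𝓜)ᵀ = Ω𝓜`) and `iωI + Γ − 𝓜` is
invertible, then the transfer function `S(ω)` is conjugate symplectic. -/
theorem transfer_function_conjSymplectic (n : ℕ) (hn : 1 ≤ n)
    (γ : Fin n → ℝ) (hγ : ∀ i, 0 < γ i)
    (M : Matrix (Fin n ⊕ Fin n) (Fin n ⊕ Fin n) ℝ)
    (hM : (OmegaR n * M)ᵀ = OmegaR n * M) (ω : ℝ)
    (hinv : IsUnit ((Complex.I * (ω : ℂ)) •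
        (1 : Matrix (Fin n ⊕ Fin n) (Fin n ⊕ Fin n) ℂ) +
      diagonal (fun i => ((Sum.elim γ γ i : ℝ) : ℂ)) - M.map Complex.ofReal)) :
    ConjSymplectic (transferFun n γ M ω) := by
  classical
  set D : Matrix (Fin n ⊕ Fin n) (Fin n ⊕ Fin n) ℂ :=
    diagonal (fun i => ((Real.sqrt (2 * Sum.elim γ γ i) : ℝ) : ℂ)) with hD
  set Γc : Matrix (Fin n ⊕ Fin n) (Fin n ⊕ Fin n) ℂ :=
    diagonal (fun i => ((Sum.elim γ γ i : ℝ) : ℂ)) with hΓc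
  set Mc : Matrix (Fin n ⊕ Fin n) (Fin n ⊕ Fin n) ℂ := M.map Complex.ofReal with hMc
  set A : Matrix (Fin n ⊕ Fin n) (Fin n ⊕ Fin n) ℂ :=
    (Complex.I * (ω : ℂ)) • (1 : Matrix (Fin n ⊕ Fin n) (Fin n ⊕ Fin n) ℂ) + Γc - Mc
    with hA
  set C : Matrix (Fin n ⊕ Fin n) (Fin n ⊕ Fin n) ℂ :=
    (-(Complex.I * (ω : ℂ))) • (1 : Matrix (Fin n ⊕ Fin n) (Fin n ⊕ Fin n) ℂ) + Γc + Mc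
    with hC
  set O : Matrix (Fin n ⊕ Fin n) (Fin n ⊕ Fin n) ℂ := Omega n with hO
  -- M commutation over ℝ
  have hMR : OmegaR n * Mᵀ = -(M * OmegaR n) := by
    have hT : (OmegaR n)ᵀ = -(OmegaR n) := by
      rw [OmegaR, Matrix.fromBlocks_transpose, Matrix.fromBlocks_neg]
      norm_num
    have h1 : Mᵀ * OmegaR n = -(OmegaR n * M) := by
      have := hM
      rw [Matrix.transpose_mul, hT] at this
      rw [← this]; simp
    have h2 : OmegaR n * (Mᵀ * OmegaR n) = M := by
      rw [h1, mul_neg, ← mul_assoc, omegaR_sq]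
      simp
    calc OmegaR n * Mᵀ
        = OmegaR n * Mᵀ * (OmegaR n * OmegaR n) * -1 := by
          rw [omegaR_sq]; simp
      _ = (OmegaR n * (Mᵀ * OmegaR n)) * OmegaR n * -1 := by noncomm_ring
      _ = -(M * OmegaR n) := by rw [h2]; simp
  -- M commutation over ℂ
  have hmapmul : ∀ X Y : Matrix (Fin n ⊕ Fin n) (Fin n ⊕ Fin n) ℝ,
      X.map Complex.ofReal * Y.map Complex.ofReal = (X * Y).map Complex.ofReal := by
    intro X Y
    ext i j
    simp only [Matrix.map_apply, Matrix.mul_apply]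
    push_cast
    rfl
  have hOMc : O * Mcᴴ = -(Mc * O) := by
    have hMcH : Mcᴴ = Mᵀ.map Complex.ofReal := by
      ext i j
      simp [hMc, Matrix.conjTranspose_apply, Complex.conj_ofReal]
    rw [hMcH, hO, omega_eq_map, hMc, hmapmul, hmapmul, hMR]
    ext i j
    simp [Matrix.map_apply]
  -- Γ and D commute with O
  have hDO : O * D = D * O := by
    rw [hO, hD]
    have : (fun i => ((Real.sqrt (2 * Sum.elim γ γ i) : ℝ) : ℂ))
        = Sum.elim (fun i => ((Real.sqrt (2 * γ i) : ℝ) : ℂ))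
            (fun i => ((Real.sqrt (2 * γ i) : ℝ) : ℂ)) := by
      ext i; cases i <;> simp
    rw [this]; exact omega_mul_diagonal _
  have hΓO : O * Γc = Γc * O := by
    rw [hO, hΓc]
    have : (fun i => ((Sum.elim γ γ i : ℝ) : ℂ))
        = Sum.elim (fun i => ((γ i : ℝ) : ℂ)) (fun i => ((γ i : ℝ) : ℂ)) := by
      ext i; cases i <;> simp
    rw [this]; exact omega_mul_diagonal _
  -- D is hermitian
  have hDH : Dᴴ = D := by
    rw [hD]
    ext i j
    rcases eq_or_ne i j with h | h
    · subst h
      simp [Matrix.conjTranspose_apply, Matrix.diagonal_apply_eq, Complex.conj_ofReal]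
    · simp [Matrix.conjTranspose_apply, Matrix.diagonal_apply_ne _ h,
        Matrix.diagonal_apply_ne' _ h]
  -- A + C = D * D
  have hsum : A + C = D * D := by
    rw [hA, hC, hD, Matrix.diagonal_mul_diagonal]
    have : ∀ i : Fin n ⊕ Fin n,
        ((Real.sqrt (2 * Sum.elim γ γ i) : ℝ) : ℂ) *
          ((Real.sqrt (2 * Sum.elim γ γ i) : ℝ) : ℂ)
        = ((Sum.elim γ γ i : ℝ) : ℂ) + ((Sum.elim γ γ i : ℝ) : ℂ) := by
      intro i
      have hpos : (0 : ℝ) ≤ 2 * Sum.elim γ γ i := by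
        have : 0 < Sum.elim γ γ i := by cases i <;> exact hγ _
        linarith
      rw [← Complex.ofReal_mul, Real.mul_self_sqrt hpos]
      push_cast
      ring
    rw [show (fun i => ((Real.sqrt (2 * Sum.elim γ γ i) : ℝ) : ℂ) *
          ((Real.sqrt (2 * Sum.elim γ γ i) : ℝ) : ℂ))
        = (fun i => ((Sum.elim γ γ i : ℝ) : ℂ) + ((Sum.elim γ γ i : ℝ) : ℂ)) from
      funext this, ← Matrix.diagonal_add, ← hΓc]
    module
  -- O * Aᴴ = C * O
  have hOA : O * Aᴴ = C * O := by
    have hAH : Aᴴ = (-(Complex.I * (ω : ℂ))) •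
        (1 : Matrix (Fin n ⊕ Fin n) (Fin n ⊕ Fin n) ℂ) + Γcᴴ - Mcᴴ := by
      rw [hA, Matrix.conjTranspose_sub, Matrix.conjTranspose_add,
        Matrix.conjTranspose_smul, Matrix.conjTranspose_one]
      congr 2
      simp [Complex.star_def, Complex.conj_ofReal, Complex.conj_I]
    have hΓH : Γcᴴ = Γc := by
      rw [hΓc]
      ext i j
      rcases eq_or_ne i j with h | h
      · subst h
        simp [Matrix.conjTranspose_apply, Matrix.diagonal_apply_eq, Complex.conj_ofReal]
      · simp [Matrix.conjTranspose_apply, Matrix.diagonal_apply_ne _ h,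
          Matrix.diagonal_apply_ne' _ h]
    rw [hAH, hΓH, hC]
    rw [mul_sub, mul_add, add_mul, add_mul, hOMc, hΓO]
    rw [Matrix.mul_smul, Matrix.smul_mul, mul_one, one_mul]
    noncomm_ring
  -- invertibility of C
  have hOu : IsUnit O := omega_isUnit
  have hAHu : IsUnit Aᴴ := by
    rw [Matrix.isUnit_iff_isUnit_det, Matrix.det_conjTranspose]
    exact ((Matrix.isUnit_iff_isUnit_det A).mp hinv).star
  have hCu : IsUnit C := by
    rw [Matrix.isUnit_iff_isUnit_det]
    have h1 : IsUnit ((C * O).det) := by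
      rw [← hOA]
      rw [Matrix.det_mul]
      exact (((Matrix.isUnit_iff_isUnit_det O).mp hOu)).mul
        ((Matrix.isUnit_iff_isUnit_det Aᴴ).mp hAHu)
    rw [Matrix.det_mul] at h1
    exact isUnit_of_mul_isUnit_left h1
  -- conclude
  show (D * A⁻¹ * D - 1) * O * (D * A⁻¹ * D - 1)ᴴ = O
  exact transfer_alg D A C O hinv hCu hsum hDO hDH hOA
end

section
/- Let n ≥ 1, let γ₁, …, γₙ > 0, set Γ = diag(γ₁, …, γₙ, γ₁, …, γₙ) ∈ ℝ^(2n×2n) and √(2Γ) = diag(√(2γ₁), …, √(2γₙ), √(2γ₁), …, √(2γₙ)). Let F, G ∈ ℝ^(n×n) be real symmetric matrices and set 𝓜 = [[0, G−F], [−(G+F), 0]] ∈ ℝ^(2n×2n). For ω ∈ ℝ such that iωI + Γ − 𝓜 is invertible (as a complex matrix), define S(ω) = √(2Γ)(iωI + Γ − 𝓜)⁻¹√(2Γ) − I, and let J = [[0, Iₙ], [Iₙ, 0]]. Then S(ω)J is complex symmetric: S(ω)J = (S(ω)J)ᵀ. -/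
open Matrix

/-- The swap matrix `J = [[0, Iₙ], [Iₙ, 0]]` over ℂ. -/
def swapJ (n : ℕ) : Matrix (Fin n ⊕ Fin n) (Fin n ⊕ Fin n) ℂ :=
  Matrix.fromBlocks 0 1 1 0

lemma swap_diag_comm (n : ℕ) (f : Fin n → ℂ) :
    Matrix.diagonal (Sum.elim f f) * Matrix.fromBlocks 0 1 1 0 =
      Matrix.fromBlocks 0 1 1 0 * Matrix.diagonal (Sum.elim f f) := by
  ext i j
  rw [Matrix.diagonal_mul, Matrix.mul_diagonal]
  cases i <;> cases j <;>
    simp only [Matrix.fromBlocks_apply₁₁, Matrix.fromBlocks_apply₁₂,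
      Matrix.fromBlocks_apply₂₁, Matrix.fromBlocks_apply₂₂, Sum.elim_inl, Sum.elim_inr,
      Matrix.zero_apply, mul_zero, zero_mul, Matrix.one_apply, mul_ite, ite_mul,
      mul_one, one_mul] <;>
    first
      | rfl
      | (split <;> simp_all)

/-- For real symmetric couplings `F`, `G` and `𝓜 = [[0, G−F], [−(G+F), 0]]`,
the matrix `S(ω)J` is complex symmetric. -/
theorem transfer_mul_swap_symmetric (n : ℕ) (hn : 1 ≤ n)
    (γ : Fin n → ℝ) (hγ : ∀ i, 0 < γ i)
    (F G : Matrix (Fin n) (Fin n) ℝ) (hF : F = Fᵀ) (hG : G = Gᵀ) (ω : ℝ)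
    (hinv : IsUnit ((Complex.I * (ω : ℂ)) •
        (1 : Matrix (Fin n ⊕ Fin n) (Fin n ⊕ Fin n) ℂ) +
      diagonal (fun i => ((Sum.elim γ γ i : ℝ) : ℂ)) -
      (Matrix.fromBlocks 0 (G - F) (-(G + F)) 0).map Complex.ofReal)) :
    transferFun n γ (Matrix.fromBlocks 0 (G - F) (-(G + F)) 0) ω * swapJ n =
      (transferFun n γ (Matrix.fromBlocks 0 (G - F) (-(G + F)) 0) ω * swapJ n)ᵀ := by
  set J : Matrix (Fin n ⊕ Fin n) (Fin n ⊕ Fin n) ℂ := Matrix.fromBlocks 0 1 1 0 with hJdef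
  set D : Matrix (Fin n ⊕ Fin n) (Fin n ⊕ Fin n) ℂ :=
    diagonal (fun i => ((Real.sqrt (2 * Sum.elim γ γ i) : ℝ) : ℂ)) with hDdef
  set Γ : Matrix (Fin n ⊕ Fin n) (Fin n ⊕ Fin n) ℂ :=
    diagonal (fun i => ((Sum.elim γ γ i : ℝ) : ℂ)) with hΓdef
  set M : Matrix (Fin n ⊕ Fin n) (Fin n ⊕ Fin n) ℂ :=
    (Matrix.fromBlocks 0 (G - F) (-(G + F)) 0).map Complex.ofReal with hMdef
  set A : Matrix (Fin n ⊕ Fin n) (Fin n ⊕ Fin n) ℂ :=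
    (Complex.I * (ω : ℂ)) • 1 + Γ - M with hAdef
  have hJJ : J * J = 1 := by
    rw [hJdef]
    simp [Matrix.fromBlocks_multiply, ← Matrix.fromBlocks_one]
  have hJT : Jᵀ = J := by
    rw [hJdef, Matrix.fromBlocks_transpose]; simp
  have hDJ : D * J = J * D := by
    rw [hDdef]
    have h : (fun i => ((Real.sqrt (2 * Sum.elim γ γ i) : ℝ) : ℂ)) =
        Sum.elim (fun j => ((Real.sqrt (2 * γ j) : ℝ) : ℂ))
          (fun j => ((Real.sqrt (2 * γ j) : ℝ) : ℂ)) := by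
      funext i; cases i <;> rfl
    rw [h]; exact swap_diag_comm n _
  have hΓJ : Γ * J = J * Γ := by
    rw [hΓdef]
    have h : (fun i => ((Sum.elim γ γ i : ℝ) : ℂ)) =
        Sum.elim (fun j => ((γ j : ℝ) : ℂ)) (fun j => ((γ j : ℝ) : ℂ)) := by
      funext i; cases i <;> rfl
    rw [h]; exact swap_diag_comm n _
  have hMJ : J * M * J = Mᵀ := by
    rw [hMdef, hJdef, Matrix.fromBlocks_map]
    rw [Matrix.fromBlocks_multiply, Matrix.fromBlocks_multiply, Matrix.fromBlocks_transpose]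
    have h1 : ((G - F).map Complex.ofReal)ᵀ = (G - F).map Complex.ofReal := by
      rw [← Matrix.transpose_map, Matrix.transpose_sub, ← hF, ← hG]
    have h2 : ((-(G + F)).map Complex.ofReal)ᵀ = (-(G + F)).map Complex.ofReal := by
      rw [← Matrix.transpose_map, Matrix.transpose_neg, Matrix.transpose_add, ← hF, ← hG]
    have h3 : ((-F + -G).map Complex.ofReal)ᵀ = (-F + -G).map Complex.ofReal := by
      rw [← Matrix.transpose_map, Matrix.transpose_add, Matrix.transpose_neg,
        Matrix.transpose_neg, ← hF, ← hG]
    simp [h1, h2, h3]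
  have hAT : Aᵀ = J * A * J := by
    rw [hAdef]
    have h1 : ((Complex.I * (ω : ℂ)) • (1 : Matrix (Fin n ⊕ Fin n) (Fin n ⊕ Fin n) ℂ)
          + Γ - M)ᵀ = (Complex.I * (ω : ℂ)) • 1 + Γ - Mᵀ := by
      rw [Matrix.transpose_sub, Matrix.transpose_add, Matrix.transpose_smul,
        Matrix.transpose_one, hΓdef, Matrix.diagonal_transpose]
    have hΓ' : J * Γ * J = Γ := by rw [← hΓJ, mul_assoc, hJJ, mul_one]
    have hX : J * ((Complex.I * (ω : ℂ)) • (1 : Matrix (Fin n ⊕ Fin n) (Fin n ⊕ Fin n) ℂ)) * J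
        = (Complex.I * (ω : ℂ)) • 1 := by
      rw [Matrix.mul_smul, Matrix.smul_mul, mul_one, hJJ]
    rw [h1]
    simp only [mul_sub, mul_add, sub_mul, add_mul]
    rw [hX, hΓ', hMJ]
  have hAA : A * A⁻¹ = 1 := Matrix.mul_nonsing_inv A (A.isUnit_iff_isUnit_det.mp hinv)
  have hAinvT : (A⁻¹)ᵀ = J * A⁻¹ * J := by
    rw [Matrix.transpose_nonsing_inv, hAT]
    refine Matrix.inv_eq_right_inv ?_
    calc J * A * J * (J * A⁻¹ * J) = J * (A * ((J * J) * (A⁻¹ * J))) := by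
          simp only [mul_assoc]
      _ = J * (A * (A⁻¹ * J)) := by rw [hJJ, one_mul]
      _ = J * ((A * A⁻¹) * J) := by rw [← mul_assoc A]
      _ = 1 := by rw [hAA, one_mul, hJJ]
  have hDT : Dᵀ = D := by rw [hDdef, Matrix.diagonal_transpose]
  have hD' : D = J * D * J := by rw [← hDJ, mul_assoc, hJJ, mul_one]
  show (D * A⁻¹ * D - 1) * J = ((D * A⁻¹ * D - 1) * J)ᵀ
  rw [Matrix.transpose_mul, hJT, Matrix.transpose_sub, Matrix.transpose_one,
    Matrix.transpose_mul, Matrix.transpose_mul, hDT, hAinvT]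
  rw [mul_sub, sub_mul, one_mul, mul_one]
  congr 1
  calc D * A⁻¹ * D * J = D * A⁻¹ * (J * D) := by rw [mul_assoc (D * A⁻¹), hDJ]
    _ = (J * D * J) * A⁻¹ * (J * D) := by rw [← hD']
    _ = J * (D * (J * A⁻¹ * J * D)) := by simp only [mul_assoc]
end

section
/- Let A : ℝ → ℂ^(n×n) be differentiable and suppose A(ω) = U(ω) Σ(ω) V(ω)† for all ω, where U, V : ℝ → ℂ^(n×n) are differentiable with U(ω), V(ω) unitary for all ω, and Σ(ω) = diag(σ₁(ω), …, σₙ(ω)) with differentiable σ_j satisfying σ₁(ω) > σ₂(ω) > … > σₙ(ω) > 0 for all ω. Then for every ω and every j = 1, …, n, the derivative of the j-th singular value is given by σ_j′(ω) = Re( (U(ω)† A′(ω) V(ω))_{jj} ). -/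
open Matrix Finset Complex

/-- Derivative of the singular values along a differentiable SVD with distinct positive
singular values: `σ_j′(ω) = Re((U(ω)† A′(ω) V(ω))_{jj})`. -/
theorem deriv_singular_values (n : ℕ)
    (A U V : ℝ → Matrix (Fin n) (Fin n) ℂ) (σ : Fin n → ℝ → ℝ)
    (hAdiff : ∀ i j : Fin n, Differentiable ℝ (fun ω => A ω i j))
    (hUdiff : ∀ i j : Fin n, Differentiable ℝ (fun ω => U ω i j))
    (hVdiff : ∀ i j : Fin n, Differentiable ℝ (fun ω => V ω i j))
    (hσdiff : ∀ j : Fin n, Differentiable ℝ (σ j))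
    (hU : ∀ ω : ℝ, (U ω)ᴴ * U ω = 1) (hV : ∀ ω : ℝ, (V ω)ᴴ * V ω = 1)
    (hdec : ∀ (ω : ℝ) (i j : Fin n), i < j → σ j ω < σ i ω)
    (hpos : ∀ (ω : ℝ) (j : Fin n), 0 < σ j ω)
    (hA : ∀ ω : ℝ, A ω = U ω * diagonal (fun i => ((σ i ω : ℝ) : ℂ)) * (V ω)ᴴ) :
    ∀ (ω : ℝ) (j : Fin n),
      deriv (σ j) ω =
        (((U ω)ᴴ * (Matrix.of fun i k => deriv (fun t => A t i k) ω) * V ω) j j).re := by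
  intro ω j
  classical
  set c : Fin n → ℂ := fun i => star (U ω i j) with hc
  set d : Fin n → ℂ := fun k => V ω k j with hd
  -- generic entry formula
  have entry : ∀ (M : Matrix (Fin n) (Fin n) ℂ),
      ((U ω)ᴴ * M * V ω) j j = ∑ i, ∑ k, c i * M i k * d k := by
    intro M
    rw [Finset.sum_comm]
    simp [mul_apply, conjTranspose_apply, Finset.sum_mul, hc, hd]
  -- F is the (j,j) entry of Uᴴ A(t) V as a function of t
  set F : ℝ → ℂ := fun t => ∑ i, ∑ k, c i * A t i k * d k with hF
  have h1 : HasDerivAt F (∑ i, ∑ k, c i * deriv (fun t => A t i k) ω * d k) ω := by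
    apply HasDerivAt.fun_sum
    intro i _
    apply HasDerivAt.fun_sum
    intro k _
    exact (((hAdiff i k).differentiableAt.hasDerivAt).const_mul (c i)).mul_const (d k)
  -- SVD expression for F
  have hFG : ∀ t, F t =
      ∑ m, (∑ i, c i * U t i m) * ((σ m t : ℝ) : ℂ) * (∑ k, star (V t k m) * d k) := by
    intro t
    have h2 : F t = ((U ω)ᴴ * A t * V ω) j j := (entry (A t)).symm
    rw [h2, hA t]
    have hassoc : (U ω)ᴴ * (U t * diagonal (fun i => ((σ i t : ℝ) : ℂ)) * (V t)ᴴ) * V ω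
        = ((U ω)ᴴ * U t) * diagonal (fun i => ((σ i t : ℝ) : ℂ)) * ((V t)ᴴ * V ω) := by
      noncomm_ring
    rw [hassoc]
    simp [mul_apply, mul_diagonal, conjTranspose_apply, hc, hd, Finset.sum_mul, mul_assoc,
      diagonal_apply, ite_mul, mul_ite, mul_zero, zero_mul, Finset.sum_ite_eq]
  -- derivatives of the factors
  set p : Fin n → ℂ := fun m => ∑ i, c i * deriv (fun t => U t i m) ω with hp
  set q : Fin n → ℂ := fun m => ∑ k, star (deriv (fun t => V t k m) ω) * d k with hq
  have hPd : ∀ m : Fin n, HasDerivAt (fun t => ∑ i, c i * U t i m) (p m) ω := by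
    intro m
    apply HasDerivAt.fun_sum
    intro i _
    exact ((hUdiff i m).differentiableAt.hasDerivAt).const_mul (c i)
  have hQd : ∀ m : Fin n, HasDerivAt (fun t => ∑ k, star (V t k m) * d k) (q m) ω := by
    intro m
    apply HasDerivAt.fun_sum
    intro k _
    exact (((hVdiff k m).differentiableAt.hasDerivAt).star).mul_const (d k)
  have hσd : ∀ m : Fin n,
      HasDerivAt (fun t => ((σ m t : ℝ) : ℂ)) (((deriv (σ m) ω : ℝ) : ℂ)) ω :=
    fun m => ((hσdiff m).differentiableAt.hasDerivAt).ofReal_comp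
  -- values at ω
  have hPω : ∀ m : Fin n, (∑ i, c i * U ω i m) = (1 : Matrix (Fin n) (Fin n) ℂ) j m := by
    intro m
    rw [← hU ω]
    simp [mul_apply, conjTranspose_apply, hc]
  have hQω : ∀ m : Fin n, (∑ k, star (V ω k m) * d k) = (1 : Matrix (Fin n) (Fin n) ℂ) m j := by
    intro m
    rw [← hV ω]
    simp [mul_apply, conjTranspose_apply, hd]
  -- total derivative via the SVD expression
  have h2 : HasDerivAt F (∑ m, ((p m * ((σ m ω : ℝ) : ℂ)
        + (1 : Matrix (Fin n) (Fin n) ℂ) j m * ((deriv (σ m) ω : ℝ) : ℂ))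
          * ((1 : Matrix (Fin n) (Fin n) ℂ) m j)
        + (1 : Matrix (Fin n) (Fin n) ℂ) j m * ((σ m ω : ℝ) : ℂ) * q m)) ω := by
    rw [funext hFG]
    apply HasDerivAt.fun_sum
    intro m _
    have h := ((hPd m).fun_mul (hσd m)).fun_mul (hQd m)
    rw [hPω m, hQω m] at h
    exact h
  have hsum : (∑ m, ((p m * ((σ m ω : ℝ) : ℂ)
        + (1 : Matrix (Fin n) (Fin n) ℂ) j m * ((deriv (σ m) ω : ℝ) : ℂ))
          * ((1 : Matrix (Fin n) (Fin n) ℂ) m j)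
        + (1 : Matrix (Fin n) (Fin n) ℂ) j m * ((σ m ω : ℝ) : ℂ) * q m))
      = p j * ((σ j ω : ℝ) : ℂ) + ((deriv (σ j) ω : ℝ) : ℂ) + ((σ j ω : ℝ) : ℂ) * q j := by
    rw [Finset.sum_eq_single j]
    · simp [one_apply]
    · intro m _ hm
      simp [one_apply, hm, Ne.symm hm]
    · simp
  rw [hsum] at h2
  -- Re (p j) = 0
  have hpre : (p j).re = 0 := by
    have hconst : HasDerivAt (fun t => ∑ i, star (U t i j) * U t i j) 0 ω := by
      have he : (fun t : ℝ => ∑ i, star (U t i j) * U t i j) = fun _ => (1 : ℂ) := by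
        funext t
        have := congrArg (fun M => M j j) (hU t)
        simpa [mul_apply, conjTranspose_apply, one_apply] using this
      rw [he]
      exact hasDerivAt_const ω 1
    have hder : HasDerivAt (fun t => ∑ i, star (U t i j) * U t i j)
        (∑ i, (star (deriv (fun t => U t i j) ω) * U ω i j
          + star (U ω i j) * deriv (fun t => U t i j) ω)) ω := by
      apply HasDerivAt.fun_sum
      intro i _
      exact (((hUdiff i j).differentiableAt.hasDerivAt).star).mul
        ((hUdiff i j).differentiableAt.hasDerivAt)
    have h0 := hconst.unique hder
    have hsum0 : p j + star (p j) = 0 := by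
      rw [h0]
      simp only [hp, hc, star_sum, StarMul.star_mul, star_star]
      rw [← Finset.sum_add_distrib]
      refine Finset.sum_congr rfl fun i _ => ?_
      first
        | ring
        | (simp only [StarMul.star_mul, star_star]; ring)
        | simp only [StarMul.star_mul, star_star]
    have h2re := congrArg Complex.re hsum0
    simp only [Complex.add_re, Complex.zero_re] at h2re
    have : (star (p j)).re = (p j).re := Complex.conj_re (p j)
    linarith [this ▸ h2re]
  -- Re (q j) = 0
  have hqre : (q j).re = 0 := by
    have hconst : HasDerivAt (fun t => ∑ k, star (V t k j) * V t k j) 0 ω := by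
      have he : (fun t : ℝ => ∑ k, star (V t k j) * V t k j) = fun _ => (1 : ℂ) := by
        funext t
        have := congrArg (fun M => M j j) (hV t)
        simpa [mul_apply, conjTranspose_apply, one_apply] using this
      rw [he]
      exact hasDerivAt_const ω 1
    have hder : HasDerivAt (fun t => ∑ k, star (V t k j) * V t k j)
        (∑ k, (star (deriv (fun t => V t k j) ω) * V ω k j
          + star (V ω k j) * deriv (fun t => V t k j) ω)) ω := by
      apply HasDerivAt.fun_sum
      intro k _
      exact (((hVdiff k j).differentiableAt.hasDerivAt).star).mul
        ((hVdiff k j).differentiableAt.hasDerivAt)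
    have h0 := hconst.unique hder
    have hsum0 : q j + star (q j) = 0 := by
      rw [h0]
      simp only [hq, hd, star_sum, StarMul.star_mul, star_star]
      try rw [← Finset.sum_add_distrib]
      try refine Finset.sum_congr rfl fun k _ => ?_
      try first
        | ring
        | (simp only [StarMul.star_mul, star_star]; ring)
        | simp only [StarMul.star_mul, star_star]
    have h2re := congrArg Complex.re hsum0
    simp only [Complex.add_re, Complex.zero_re] at h2re
    have : (star (q j)).re = (q j).re := Complex.conj_re (q j)
    linarith [this ▸ h2re]
  -- put everything together
  have heq := h1.unique h2
  rw [entry]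
  simp only [Matrix.of_apply]
  rw [heq]
  simp [Complex.add_re, Complex.mul_re, Complex.ofReal_re, Complex.ofReal_im, hpre, hqre]
end

section
/- Let A : ℝ → ℂ^(n×n) be differentiable with A(ω) = A(ω)ᵀ for all ω, and suppose A(ω) = W(ω) Σ(ω) W(ω)ᵀ is a smooth Takagi decomposition: W : ℝ → ℂ^(n×n) is differentiable with W(ω) unitary for all ω, and Σ(ω) = diag(σ₁(ω), …, σₙ(ω)) with differentiable σ_j satisfying σ₁(ω) > … > σₙ(ω) > 0 for all ω. Set U = W and V = W* (entrywise conjugate), so that A = U Σ V†, and define H = U†U′ and K = V†V′. Then for all ω: K(ω) = H(ω)* (entrywise conjugate), and H_{jj}(ω) + K_{jj}(ω) = 0 for every j = 1, …, n. (A smooth Takagi decomposition satisfies the joint-minimum-variation condition.) -/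
open Matrix

/-- Entrywise derivative of a matrix-valued function of a real variable. -/
noncomputable def matDeriv {n : ℕ} (B : ℝ → Matrix (Fin n) (Fin n) ℂ) (ω : ℝ) :
    Matrix (Fin n) (Fin n) ℂ :=
  Matrix.of fun i j => deriv (fun t => B t i j) ω

/-- A smooth Takagi decomposition `A = W Σ Wᵀ` of a complex symmetric matrix function,
viewed as the SVD `A = U Σ V†` with `U = W` and `V = W*`, satisfies `K = H*` and the
joint-minimum-variation condition `H_{jj} + K_{jj} = 0`, where `H = U†U′`, `K = V†V′`. -/
theorem takagi_is_joint_minimum_variation (n : ℕ)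
    (A W : ℝ → Matrix (Fin n) (Fin n) ℂ) (σ : Fin n → ℝ → ℝ)
    (hAdiff : ∀ i j : Fin n, Differentiable ℝ (fun ω => A ω i j))
    (hWdiff : ∀ i j : Fin n, Differentiable ℝ (fun ω => W ω i j))
    (hσdiff : ∀ j : Fin n, Differentiable ℝ (σ j))
    (hAsym : ∀ ω : ℝ, A ω = (A ω)ᵀ)
    (hW : ∀ ω : ℝ, (W ω)ᴴ * W ω = 1)
    (hdec : ∀ (ω : ℝ) (i j : Fin n), i < j → σ j ω < σ i ω)
    (hpos : ∀ (ω : ℝ) (j : Fin n), 0 < σ j ω)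
    (hA : ∀ ω : ℝ, A ω = W ω * diagonal (fun i => ((σ i ω : ℝ) : ℂ)) * (W ω)ᵀ) :
    ∀ ω : ℝ,
      ((fun t => (W t).map (starRingEnd ℂ)) ω)ᴴ *
          matDeriv (fun t => (W t).map (starRingEnd ℂ)) ω =
        ((W ω)ᴴ * matDeriv W ω).map (starRingEnd ℂ) ∧
      ∀ j : Fin n,
        ((W ω)ᴴ * matDeriv W ω) j j +
          (((fun t => (W t).map (starRingEnd ℂ)) ω)ᴴ *
            matDeriv (fun t => (W t).map (starRingEnd ℂ)) ω) j j = 0 := by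
  intro ω
  -- derivative of the conjugate is the conjugate of the derivative
  have hder : ∀ i j : Fin n,
      deriv (fun t => (starRingEnd ℂ) (W t i j)) ω
        = (starRingEnd ℂ) (deriv (fun t => W t i j) ω) := by
    intro i j
    exact ((hWdiff i j ω).hasDerivAt.star).deriv
  have hKH : ((fun t => (W t).map (starRingEnd ℂ)) ω)ᴴ *
        matDeriv (fun t => (W t).map (starRingEnd ℂ)) ω =
      ((W ω)ᴴ * matDeriv W ω).map (starRingEnd ℂ) := by
    ext i j
    simp only [matDeriv, Matrix.mul_apply, Matrix.conjTranspose_apply, Matrix.map_apply,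
      Matrix.of_apply, map_sum, _root_.map_mul]
    refine Finset.sum_congr rfl fun k _ => ?_
    rw [hder k j]
    simp [mul_comm]
  refine ⟨hKH, fun j => ?_⟩
  set d : Fin n → ℂ := fun k => deriv (fun t => W t k j) ω with hd
  have hsum : HasDerivAt (fun t => ∑ k, star (W t k j) * W t k j)
      (∑ k, (star (d k) * W ω k j + star (W ω k j) * d k)) ω := by
    apply HasDerivAt.fun_sum
    intro k _
    exact ((hWdiff k j ω).hasDerivAt.star).mul (hWdiff k j ω).hasDerivAt
  have hconst : (fun t => ∑ k, star (W t k j) * W t k j) = fun _ => (1 : ℂ) := by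
    funext t
    have h := congrArg (fun M => M j j) (hW t)
    simpa [Matrix.mul_apply, Matrix.one_apply, Matrix.conjTranspose_apply] using h
  have hzero : (∑ k, (star (d k) * W ω k j + star (W ω k j) * d k)) = 0 := by
    rw [hconst] at hsum
    exact hsum.unique (hasDerivAt_const ω 1)
  have hK : (((fun t => (W t).map (starRingEnd ℂ)) ω)ᴴ *
      matDeriv (fun t => (W t).map (starRingEnd ℂ)) ω) j j
      = (starRingEnd ℂ) (((W ω)ᴴ * matDeriv W ω) j j) := by
    rw [hKH]; simp [Matrix.map_apply]
  rw [hK]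
  have hH : ((W ω)ᴴ * matDeriv W ω) j j = ∑ k, star (W ω k j) * d k := by
    simp [matDeriv, Matrix.mul_apply, Matrix.conjTranspose_apply, hd]
  rw [hH]
  rw [map_sum]
  rw [← Finset.sum_add_distrib] at *
  calc (∑ k, (star (W ω k j) * d k + (starRingEnd ℂ) (star (W ω k j) * d k)))
      = ∑ k, (star (d k) * W ω k j + star (W ω k j) * d k) := by
        refine Finset.sum_congr rfl fun k _ => ?_
        simp [mul_comm]
        ring
    _ = 0 := hzero
end

section
/- Let A : ℝ → ℂ^(n×n) be continuously differentiable with A(ω) = A(ω)ᵀ for all ω, and suppose A(ω) = U(ω) Σ(ω) V(ω)† for all ω, where U, V : ℝ → ℂ^(n×n) are continuously differentiable with U(ω), V(ω) unitary for all ω, and Σ(ω) = diag(σ₁(ω), …, σₙ(ω)) with σ₁(ω) > … > σₙ(ω) > 0 for all ω. Assume the joint-minimum-variation condition holds: (U(ω)†U′(ω))_{jj} + (V(ω)†V′(ω))_{jj} = 0 for all j and all ω. If V(0) = U(0)* (entrywise conjugate), then V(ω) = U(ω)* for all ω; consequently A(ω) = U(ω) Σ(ω) U(ω)ᵀ is a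 smooth Takagi decomposition of A. -/
open Matrix

/-- A joint-minimum-variation SVD of a complex symmetric matrix function whose unitary
factors satisfy `V(0) = U(0)*` is a smooth Takagi decomposition: `V(ω) = U(ω)*` for all
`ω`, and hence `A(ω) = U(ω) Σ(ω) U(ω)ᵀ`. -/
theorem joint_minimum_variation_is_takagi (n : ℕ)
    (A U V : ℝ → Matrix (Fin n) (Fin n) ℂ) (σ : Fin n → ℝ → ℝ)
    (hAdiff : ∀ i j : Fin n, ContDiff ℝ 1 (fun ω => A ω i j))
    (hUdiff : ∀ i j : Fin n, ContDiff ℝ 1 (fun ω => U ω i j))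
    (hVdiff : ∀ i j : Fin n, ContDiff ℝ 1 (fun ω => V ω i j))
    (hAsym : ∀ ω : ℝ, A ω = (A ω)ᵀ)
    (hU : ∀ ω : ℝ, (U ω)ᴴ * U ω = 1) (hV : ∀ ω : ℝ, (V ω)ᴴ * V ω = 1)
    (hdec : ∀ (ω : ℝ) (i j : Fin n), i < j → σ j ω < σ i ω)
    (hpos : ∀ (ω : ℝ) (j : Fin n), 0 < σ j ω)
    (hA : ∀ ω : ℝ, A ω = U ω * diagonal (fun i => ((σ i ω : ℝ) : ℂ)) * (V ω)ᴴ)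
    (hjmv : ∀ (ω : ℝ) (j : Fin n),
      ((U ω)ᴴ * matDeriv U ω) j j + ((V ω)ᴴ * matDeriv V ω) j j = 0)
    (h0 : V 0 = (U 0).map (starRingEnd ℂ)) :
    ∀ ω : ℝ,
      V ω = (U ω).map (starRingEnd ℂ) ∧
      A ω = U ω * diagonal (fun i => ((σ i ω : ℝ) : ℂ)) * (U ω)ᵀ := by
  classical
  set c := starRingEnd ℂ with hc
  -- basic conjugation facts
  have hmapT : ∀ M : Matrix (Fin n) (Fin n) ℂ, (Mᴴ).map (starRingEnd ℂ) = Mᵀ := by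
    intro M; ext i j
    simp [Matrix.map_apply, conjTranspose_apply]
  have hmapH : ∀ M : Matrix (Fin n) (Fin n) ℂ, (M.map (starRingEnd ℂ))ᴴ = Mᵀ := by
    intro M; ext i j
    simp [Matrix.map_apply, conjTranspose_apply]
  have hTH : ∀ M : Matrix (Fin n) (Fin n) ℂ, (Mᵀ)ᴴ = M.map (starRingEnd ℂ) := by
    intro M; ext i j
    simp [Matrix.map_apply, conjTranspose_apply]
  -- unitarity variants
  have hUUH : ∀ ω, U ω * (U ω)ᴴ = 1 := fun ω => mul_eq_one_comm.mp (hU ω)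
  have hVVH : ∀ ω, V ω * (V ω)ᴴ = 1 := fun ω => mul_eq_one_comm.mp (hV ω)
  have hcUUt : ∀ ω, (U ω).map (starRingEnd ℂ) * (U ω)ᵀ = 1 := by
    intro ω
    have h := congrArg (fun M => M.map (starRingEnd ℂ)) (hUUH ω)
    simp only [Matrix.map_mul, hmapT] at h
    simpa using h
  have hUtcU : ∀ ω, (U ω)ᵀ * (U ω).map (starRingEnd ℂ) = 1 :=
    fun ω => mul_eq_one_comm.mp (hcUUt ω)
  -- the diagonal matrix of singular values
  set S : ℝ → Matrix (Fin n) (Fin n) ℂ :=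
    fun ω => diagonal (fun i => ((σ i ω : ℝ) : ℂ)) with hSdef
  have hSH : ∀ ω, (S ω)ᴴ = S ω := by
    intro ω
    have hstar : (star fun i => ((σ i ω : ℝ) : ℂ)) = fun i => ((σ i ω : ℝ) : ℂ) := by
      funext i; simp [Complex.conj_ofReal]
    rw [hSdef, diagonal_conjTranspose, hstar]
  have hSmap : ∀ ω, (S ω).map (starRingEnd ℂ) = S ω := by
    intro ω
    rw [hSdef, Matrix.diagonal_map (map_zero _)]
    congr 1
    funext i
    simp [Complex.conj_ofReal]
  -- A is symmetric, so AᴴA has two diagonalizations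
  have h1 : ∀ ω, (A ω)ᴴ * A ω = V ω * (S ω * S ω) * (V ω)ᴴ := by
    intro ω
    rw [hA ω]
    change (U ω * S ω * (V ω)ᴴ)ᴴ * (U ω * S ω * (V ω)ᴴ) = _
    simp only [conjTranspose_mul, conjTranspose_conjTranspose, hSH]
    simp only [Matrix.mul_assoc]
    rw [← Matrix.mul_assoc ((U ω)ᴴ) (U ω), hU ω, Matrix.one_mul]
  have hAAH : ∀ ω, A ω * (A ω)ᴴ = U ω * (S ω * S ω) * (U ω)ᴴ := by
    intro ω
    rw [hA ω]
    change (U ω * S ω * (V ω)ᴴ) * (U ω * S ω * (V ω)ᴴ)ᴴ = _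
    simp only [conjTranspose_mul, conjTranspose_conjTranspose, hSH]
    simp only [Matrix.mul_assoc]
    rw [← Matrix.mul_assoc ((V ω)ᴴ) (V ω), hV ω, Matrix.one_mul]
  have hAt : ∀ ω, (A ω)ᵀ = A ω := fun ω => (hAsym ω).symm
  have h2 : ∀ ω, (A ω)ᴴ * A ω = (U ω).map (starRingEnd ℂ) * (S ω * S ω) * (U ω)ᵀ := by
    intro ω
    have hm := congrArg (fun M => M.map (starRingEnd ℂ)) (hAAH ω)
    simp only [Matrix.map_mul, hmapT, hSmap] at hm
    have hAmc : (A ω).map (starRingEnd ℂ) = (A ω)ᴴ := by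
      ext i j
      have hsym : A ω j i = A ω i j := by
        conv_lhs => rw [hAsym ω]
        rfl
      simp [Matrix.map_apply, conjTranspose_apply, hsym]
    rw [hAmc, hAt ω] at hm
    exact hm
  -- W = Uᵀ V commutes with S², hence is diagonal
  have hWcomm : ∀ ω, ((U ω)ᵀ * V ω) * (S ω * S ω) = (S ω * S ω) * ((U ω)ᵀ * V ω) := by
    intro ω
    have h12 : V ω * (S ω * S ω) * (V ω)ᴴ
        = (U ω).map (starRingEnd ℂ) * (S ω * S ω) * (U ω)ᵀ := (h1 ω).symm.trans (h2 ω)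
    calc ((U ω)ᵀ * V ω) * (S ω * S ω)
        = (U ω)ᵀ * (V ω * (S ω * S ω) * (V ω)ᴴ) * V ω := by
          simp only [Matrix.mul_assoc]
          rw [hV ω, Matrix.mul_one]
      _ = (U ω)ᵀ * ((U ω).map (starRingEnd ℂ) * (S ω * S ω) * (U ω)ᵀ) * V ω := by rw [h12]
      _ = (S ω * S ω) * ((U ω)ᵀ * V ω) := by
          simp only [Matrix.mul_assoc]
          rw [← Matrix.mul_assoc ((U ω)ᵀ) ((U ω).map (starRingEnd ℂ)), hUtcU ω,
            Matrix.one_mul]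
  have hWdiag : ∀ ω (i j : Fin n), i ≠ j → ((U ω)ᵀ * V ω) i j = 0 := by
    intro ω i j hij
    have h := congrFun (congrFun (hWcomm ω) i) j
    have hSS : S ω * S ω = diagonal (fun i => ((σ i ω : ℝ) : ℂ) * ((σ i ω : ℝ) : ℂ)) := by
      rw [hSdef, diagonal_mul_diagonal]
    rw [hSS, mul_diagonal, diagonal_mul] at h
    have hne : ((σ i ω : ℝ) : ℂ) * ((σ i ω : ℝ) : ℂ) ≠ ((σ j ω : ℝ) : ℂ) * ((σ j ω : ℝ) : ℂ) := by
      have hr : σ i ω * σ i ω ≠ σ j ω * σ j ω := by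
        rcases lt_or_gt_of_ne (Fin.val_ne_of_ne hij) with h' | h'
        · have := hdec ω i j (Fin.lt_def.mpr h')
          have := hpos ω j
          nlinarith
        · have := hdec ω j i (Fin.lt_def.mpr h')
          have := hpos ω i
          nlinarith
      intro hcc
      apply hr
      have : ((σ i ω * σ i ω : ℝ) : ℂ) = ((σ j ω * σ j ω : ℝ) : ℂ) := by push_cast; exact hcc
      exact_mod_cast this
    have hfac : ((U ω)ᵀ * V ω) i j
        * (((σ j ω : ℝ) : ℂ) * ((σ j ω : ℝ) : ℂ) - ((σ i ω : ℝ) : ℂ) * ((σ i ω : ℝ) : ℂ)) = 0 := by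
      rw [mul_sub, h]; ring
    rcases mul_eq_zero.mp hfac with h' | h'
    · exact h'
    · exact absurd (sub_eq_zero.mp h').symm hne
  -- W is unitary, hence the diagonal entries are unimodular
  have hWunit : ∀ ω, ((U ω)ᵀ * V ω)ᴴ * ((U ω)ᵀ * V ω) = 1 := by
    intro ω
    rw [conjTranspose_mul, hTH]
    calc (V ω)ᴴ * (U ω).map (starRingEnd ℂ) * ((U ω)ᵀ * V ω)
        = (V ω)ᴴ * ((U ω).map (starRingEnd ℂ) * (U ω)ᵀ) * V ω := by
          simp only [Matrix.mul_assoc]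
      _ = 1 := by rw [hcUUt ω, Matrix.mul_one, hV ω]
  have hWjj : ∀ ω (j : Fin n),
      star (((U ω)ᵀ * V ω) j j) * ((U ω)ᵀ * V ω) j j = 1 := by
    intro ω j
    have h := congrFun (congrFun (hWunit ω) j) j
    rw [mul_apply] at h
    rw [Finset.sum_eq_single j (fun k _ hk => by
      rw [conjTranspose_apply, hWdiag ω k j hk]; simp) (by simp)] at h
    rw [conjTranspose_apply] at h
    simpa using h
  -- V = U* · W entrywise
  have hVW : ∀ ω (i j : Fin n),
      V ω i j = starRingEnd ℂ (U ω i j) * ((U ω)ᵀ * V ω) j j := by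
    intro ω i j
    have hfull : (U ω).map (starRingEnd ℂ) * ((U ω)ᵀ * V ω) = V ω := by
      rw [← Matrix.mul_assoc, hcUUt ω, Matrix.one_mul]
    have h := congrFun (congrFun hfull i) j
    rw [mul_apply] at h
    rw [Finset.sum_eq_single j (fun k _ hk => by
      rw [hWdiag ω k j hk]; simp) (by simp)] at h
    rw [Matrix.map_apply] at h
    exact h.symm
  -- the diagonal entries of W are differentiable with prescribed derivative
  have hdW : ∀ (j : Fin n) (ω : ℝ), HasDerivAt (fun t => ((U t)ᵀ * V t) j j)
      (∑ k, (matDeriv U ω k j * V ω k j + U ω k j * matDeriv V ω k j)) ω := by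
    intro j ω
    have heq : (fun t => ((U t)ᵀ * V t) j j) = fun t => ∑ k, U t k j * V t k j := by
      funext t
      rw [mul_apply]
      simp [transpose_apply]
    rw [heq]
    apply HasDerivAt.fun_sum
    intro k _
    have hu : HasDerivAt (fun t => U t k j) (matDeriv U ω k j) ω :=
      ((hUdiff k j).differentiable one_ne_zero ω).hasDerivAt
    have hv : HasDerivAt (fun t => V t k j) (matDeriv V ω k j) ω :=
      ((hVdiff k j).differentiable one_ne_zero ω).hasDerivAt
    exact hu.mul hv
  -- key computation: the derivative vanishes
  have hkey : ∀ (j : Fin n) (ω : ℝ),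
      star (((U ω)ᵀ * V ω) j j)
        * (∑ k, (matDeriv U ω k j * V ω k j + U ω k j * matDeriv V ω k j)) = 0 := by
    intro j ω
    have hj := hjmv ω j
    rw [mul_apply, mul_apply] at hj
    simp only [conjTranspose_apply] at hj
    rw [Finset.mul_sum]
    have hterm : ∀ k : Fin n,
        star (((U ω)ᵀ * V ω) j j)
          * (matDeriv U ω k j * V ω k j + U ω k j * matDeriv V ω k j)
        = star (U ω k j) * matDeriv U ω k j + star (V ω k j) * matDeriv V ω k j := by
      intro k
      have h1 := hVW ω k j
      have h2 := hWjj ω j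
      have h3 : star (V ω k j) = U ω k j * star (((U ω)ᵀ * V ω) j j) := by
        rw [h1]
        simp only [hc, starRingEnd_apply]
        rw [star_mul']
        rw [star_star]
      rw [h3, h1]
      simp only [hc, starRingEnd_apply]
      linear_combination (star (U ω k j) * matDeriv U ω k j) * h2
    rw [Finset.sum_congr rfl (fun k _ => hterm k), Finset.sum_add_distrib]
    exact hj
  have hWderiv : ∀ (j : Fin n) (ω : ℝ),
      deriv (fun t => ((U t)ᵀ * V t) j j) ω = 0 := by
    intro j ω
    rw [(hdW j ω).deriv]
    set D := ∑ k, (matDeriv U ω k j * V ω k j + U ω k j * matDeriv V ω k j) with hD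
    have : D = ((U ω)ᵀ * V ω) j j * (star (((U ω)ᵀ * V ω) j j) * D) := by
      rw [← mul_assoc, mul_comm (((U ω)ᵀ * V ω) j j), hWjj ω j, one_mul]
    rw [this, hkey j ω, mul_zero]
  have hWconst : ∀ (j : Fin n) (ω : ℝ),
      ((U ω)ᵀ * V ω) j j = ((U 0)ᵀ * V 0) j j := by
    intro j ω
    exact is_const_of_deriv_eq_zero
      (fun t => (hdW j t).differentiableAt) (hWderiv j) ω 0
  have hW0 : ∀ j : Fin n, ((U 0)ᵀ * V 0) j j = 1 := by
    intro j
    rw [h0, hUtcU 0]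
    simp
  have hVU : ∀ ω : ℝ, V ω = (U ω).map (starRingEnd ℂ) := by
    intro ω
    ext i j
    rw [hVW ω i j, hWconst j ω, hW0 j, mul_one, Matrix.map_apply]
  intro ω
  refine ⟨hVU ω, ?_⟩
  rw [hA ω, hVU ω, hmapH]
end
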